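/- arXiv:1210.3349 — 7 statements merged into one kernel-verified Lean document; each statement's English description precedes it below -/
import Mathlib

section
/- C_n is odd if and only if n = 2^a - 1 for some integer a ≥ 0. -/
open Finset

lemma zmod2_mul_self : ∀ x : ZMod 2, x * x = x := by decide

lemma sum_sq_parity (c : ℕ → ZMod 2) (n : ℕ) :
    (∑ i ∈ range (n + 1), c i * c (n - i)) = if 2 ∣ n then c (n / 2) else 0 := by
  split_ifs with h
  · obtain ⟨m, rfl⟩ := h
    have hm : m ∈ range (2 * m + 1) := by simp; omega
    rw [← Finset.add_sum_erase _ _ hm]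
    have h0 : (∑ i ∈ (range (2 * m + 1)).erase m, c i * c (2 * m - i)) = 0 := by
      apply Finset.sum_involution (fun i _ => 2 * m - i)
      · intro a ha
        have h1 : a ≤ 2 * m := by
          have := Finset.mem_range.mp (Finset.mem_of_mem_erase ha); omega
        rw [Nat.sub_sub_self h1, mul_comm]
        exact CharTwo.add_self_eq_zero _
      · intro a ha _
        have h2 := Finset.mem_erase.mp ha
        have h1 := Finset.mem_range.mp h2.2
        omega
      · intro a ha
        have h2 := Finset.mem_erase.mp ha
        have h1 := Finset.mem_range.mp h2.2
        simp only [Finset.mem_erase, Finset.mem_range]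
        omega
      · intro a ha
        have h1 : a ≤ 2 * m := by
          have := Finset.mem_range.mp (Finset.mem_of_mem_erase ha); omega
        exact Nat.sub_sub_self h1
    rw [h0, add_zero]
    have : 2 * m - m = m := by omega
    rw [this, zmod2_mul_self]
    congr 1
    omega
  · apply Finset.sum_involution (fun i _ => n - i)
    · intro a ha
      have h1 : a ≤ n := by have := Finset.mem_range.mp ha; omega
      rw [Nat.sub_sub_self h1, mul_comm]
      exact CharTwo.add_self_eq_zero _
    · intro a ha _
      have h1 := Finset.mem_range.mp ha
      omega
    · intro a ha
      have h1 := Finset.mem_range.mp ha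
      simp only [Finset.mem_range]
      omega
    · intro a ha
      have h1 : a ≤ n := by have := Finset.mem_range.mp ha; omega
      exact Nat.sub_sub_self h1

lemma catalan_cast_succ (n : ℕ) :
    ((catalan (n + 1) : ℕ) : ZMod 2) = if 2 ∣ n then ((catalan (n / 2) : ℕ) : ZMod 2) else 0 := by
  rw [catalan_succ]
  push_cast
  rw [Fin.sum_univ_eq_sum_range (fun i => ((catalan i : ZMod 2) * (catalan (n - i) : ZMod 2)))]
  exact sum_sq_parity (fun i => ((catalan i : ℕ) : ZMod 2)) n

lemma odd_iff_cast (k : ℕ) : Odd k ↔ ((k : ℕ) : ZMod 2) = 1 := by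
  rw [Nat.odd_iff, ← ZMod.natCast_mod]
  rcases Nat.mod_two_eq_zero_or_one k with h | h <;> simp [h]

/-- `C_n` is odd if and only if `n = 2^a - 1` for some integer `a ≥ 0`. -/
theorem catalan_odd_iff (n : ℕ) : Odd (catalan n) ↔ ∃ a : ℕ, n = 2 ^ a - 1 := by
  rw [odd_iff_cast]
  induction n using Nat.strong_induction_on with
  | _ n ih =>
    match n with
    | 0 =>
      simp [catalan_zero]
      exact ⟨0, by norm_num⟩
    | n + 1 =>
      rw [catalan_cast_succ]
      by_cases h : 2 ∣ n
      · obtain ⟨m, rfl⟩ := h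
        rw [if_pos ⟨m, rfl⟩]
        have hm : 2 * m / 2 = m := by omega
        rw [hm]
        rw [ih m (by omega)]
        constructor
        · rintro ⟨a, rfl⟩
          refine ⟨a + 1, ?_⟩
          have : 1 ≤ 2 ^ a := Nat.one_le_two_pow
          rw [pow_succ]
          omega
        · rintro ⟨a, ha⟩
          match a with
          | 0 => omega
          | b + 1 =>
            refine ⟨b, ?_⟩
            have h1 : 1 ≤ 2 ^ b := Nat.one_le_two_pow
            rw [pow_succ] at ha
            omega
      · rw [if_neg h]
        constructor
        · intro h0; exact absurd h0 (by norm_num)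
        · rintro ⟨a, ha⟩
          exfalso
          match a with
          | 0 => omega
          | b + 1 =>
            have h1 : 1 ≤ 2 ^ b := Nat.one_le_two_pow
            rw [pow_succ] at ha
            exact h ⟨2 ^ b - 1, by omega⟩
end

section
/- For all n ≥ 0, C_n ≡ 1 (mod 4) if n = 2^a - 1 for some a ≥ 0; C_n ≡ 2 (mod 4) if n = 2^a + 2^b - 1 for some b > a ≥ 0; and C_n ≡ 0 (mod 4) otherwise. -/
open Finset
open Finset

lemma two_pow_pos' (a : ℕ) : 1 ≤ 2 ^ a := Nat.one_le_two_pow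

lemma log_two_pow_add {a b : ℕ} (h : a < b) : Nat.log 2 (2 ^ a + 2 ^ b) = b := by
  apply Nat.log_eq_of_pow_le_of_lt_pow
  · have := two_pow_pos' a
    omega
  · have h1 : 2 ^ a < 2 ^ b := Nat.pow_lt_pow_right one_lt_two h
    have : 2 ^ (b + 1) = 2 * 2 ^ b := by ring
    omega

lemma two_pow_add_unique {a b c d : ℕ} (hab : a < b) (hcd : c < d)
    (h : 2 ^ a + 2 ^ b = 2 ^ c + 2 ^ d) : a = c ∧ b = d := by
  have hb := log_two_pow_add hab
  have hd := log_two_pow_add hcd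
  rw [h] at hb
  have hbd : b = d := by rw [hb] at hd; omega
  subst hbd
  have : (2:ℕ) ^ a = 2 ^ c := by omega
  exact ⟨Nat.pow_right_injective le_rfl this, rfl⟩

lemma two_pow_add_ne_two_pow {a b e : ℕ} (hab : a < b) : 2 ^ a + 2 ^ b ≠ 2 ^ e := by
  intro h
  have hb := log_two_pow_add hab
  rw [h, Nat.log_pow one_lt_two] at hb
  obtain rfl : e = b := hb
  have := two_pow_pos' a
  omega

lemma catalan_succ_range (n : ℕ) :
    catalan (n + 1) = ∑ i ∈ Finset.range (n + 1), catalan i * catalan (n - i) := by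
  rw [catalan_succ]
  exact Fin.sum_univ_eq_sum_range (fun i => catalan i * catalan (n - i)) (n + 1)

lemma fold_odd (f : ℕ → ℕ) (n : ℕ) (hf : ∀ i, i ≤ 2 * n → f (2 * n - i) = f i) :
    ∑ i ∈ Finset.range (2 * n + 1), f i = 2 * ∑ i ∈ Finset.range n, f i + f n := by
  have h1 : 2 * n + 1 = (n + 1) + n := by omega
  rw [h1, Finset.sum_range_add, Finset.sum_range_succ]
  have h2 : ∑ i ∈ Finset.range n, f (n + 1 + i) = ∑ i ∈ Finset.range n, f i := by
    rw [← Finset.sum_range_reflect (fun i => f (n + 1 + i)) n]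
    apply Finset.sum_congr rfl
    intro i hi
    simp only [Finset.mem_range] at hi
    have : n + 1 + (n - 1 - i) = 2 * n - i := by omega
    rw [this, hf i (by omega)]
  rw [h2]; ring

lemma fold_even (f : ℕ → ℕ) (n : ℕ) (hf : ∀ i, i < 2 * n → f (2 * n - 1 - i) = f i) :
    ∑ i ∈ Finset.range (2 * n), f i = 2 * ∑ i ∈ Finset.range n, f i := by
  have h1 : 2 * n = n + n := by omega
  rw [h1, Finset.sum_range_add]
  have h2 : ∑ i ∈ Finset.range n, f (n + i) = ∑ i ∈ Finset.range n, f i := by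
    rw [← Finset.sum_range_reflect (fun i => f (n + i)) n]
    apply Finset.sum_congr rfl
    intro i hi
    simp only [Finset.mem_range] at hi
    have : n + (n - 1 - i) = 2 * n - 1 - i := by omega
    rw [this, hf i (by omega)]
  rw [h2]; ring

lemma catalan_odd_eq (n : ℕ) :
    catalan (2 * n + 1) =
      2 * (∑ i ∈ Finset.range n, catalan i * catalan (2 * n - i)) + catalan n * catalan n := by
  have h := catalan_succ_range (2 * n)
  rw [h, fold_odd (fun i => catalan i * catalan (2 * n - i)) n]
  · have : 2 * n - n = n := by omega
    rw [this]
  · intro i hi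
    have h2 : 2 * n - (2 * n - i) = i := by omega
    simp only [h2]
    ring

lemma catalan_even_eq (n : ℕ) :
    catalan (2 * n + 2) =
      2 * ∑ i ∈ Finset.range (n + 1), catalan i * catalan (2 * n + 1 - i) := by
  have h := catalan_succ_range (2 * n + 1)
  rw [show 2 * n + 2 = 2 * n + 1 + 1 from by omega, h,
    show 2 * n + 1 + 1 = 2 * (n + 1) from by omega, fold_even (fun i => catalan i * catalan (2 * n + 1 - i)) (n + 1)]
  intro i hi
  have h2 : 2 * (n + 1) - 1 - i = 2 * n + 1 - i := by omega
  have h3 : 2 * n + 1 - (2 * n + 1 - i) = i := by omega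
  simp only [h2, h3]
  ring

lemma mul_self_mod_two (c : ℕ) : c * c % 2 = c % 2 := by
  conv_lhs => rw [Nat.mul_mod]
  rcases Nat.mod_two_eq_zero_or_one c with h | h <;> simp [h]

lemma catalan_mod_two : ∀ m, (catalan m % 2 = 1 ↔ ∃ a, m + 1 = 2 ^ a) := by
  intro m
  induction m using Nat.strong_induction_on with
  | _ m ih =>
    obtain ⟨k, hk | hk⟩ := Nat.even_or_odd' m
    · rcases k with _ | j
      · subst hk
        norm_num [catalan_zero]
        exact ⟨0, rfl⟩
      · have hm : m = 2 * j + 2 := by omega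
        subst hm
        have h0 : catalan (2 * j + 2) % 2 = 0 := by
          rw [catalan_even_eq j]; omega
        constructor
        · omega
        · rintro ⟨a, ha⟩
          exfalso
          rcases a with _ | e
          · omega
          · have : (2:ℕ) ^ (e + 1) = 2 * 2 ^ e := by ring
            omega
    · subst hk
      have heq := catalan_odd_eq k
      have hcc := mul_self_mod_two (catalan k)
      have hmod : catalan (2 * k + 1) % 2 = catalan k % 2 := by omega
      rw [hmod, ih k (by omega)]
      constructor
      · rintro ⟨a, ha⟩
        exact ⟨a + 1, by rw [pow_succ]; omega⟩
      · rintro ⟨a, ha⟩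
        rcases a with _ | e
        · omega
        · exact ⟨e, by rw [pow_succ] at ha; omega⟩

lemma odd_term {n i : ℕ} (hi : i < n) (h : catalan i * catalan (2 * n - i) % 2 = 1) :
    ∃ c d, c < d ∧ i + 1 = 2 ^ c ∧ 2 ^ c + 2 ^ d = 2 * n + 2 := by
  rw [Nat.mul_mod] at h
  have h1 : catalan i % 2 = 1 := by
    rcases Nat.mod_two_eq_zero_or_one (catalan i) with hh | hh
    · rw [hh] at h; simp at h
    · exact hh
  have h2 : catalan (2 * n - i) % 2 = 1 := by
    rcases Nat.mod_two_eq_zero_or_one (catalan (2 * n - i)) with hh | hh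
    · rw [hh] at h; simp at h
    · exact hh
  obtain ⟨c, hc⟩ := (catalan_mod_two i).1 h1
  obtain ⟨d, hd⟩ := (catalan_mod_two _).1 h2
  have hsum : 2 ^ c + 2 ^ d = 2 * n + 2 := by omega
  have hlt : (2:ℕ) ^ c < 2 ^ d := by omega
  exact ⟨c, d, (Nat.pow_lt_pow_iff_right one_lt_two).1 hlt, hc, hsum⟩

lemma mod_four_one_of_odd {c : ℕ} (h : c % 2 = 1) : c * c % 4 = 1 := by
  obtain ⟨k, hk⟩ : ∃ k, c = 2 * k + 1 := ⟨c / 2, by omega⟩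
  have : c * c = 4 * (k * k + k) + 1 := by rw [hk]; ring
  omega

lemma mod_four_zero_of_even {c : ℕ} (h : c % 2 = 0) : c * c % 4 = 0 := by
  obtain ⟨k, hk⟩ : ∃ k, c = 2 * k := ⟨c / 2, by omega⟩
  have : c * c = 4 * (k * k) := by rw [hk]; ring
  omega

lemma catalan_odd_mod_four_P1 {n e : ℕ} (h : n + 1 = 2 ^ e) : catalan (2 * n + 1) % 4 = 1 := by
  have heq := catalan_odd_eq n
  have hSmod : (∑ i ∈ Finset.range n, catalan i * catalan (2 * n - i)) % 2 = 0 := by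
    rw [Finset.sum_nat_mod]
    have hz : ∀ i ∈ Finset.range n, catalan i * catalan (2 * n - i) % 2 = 0 := by
      intro i hi
      simp only [Finset.mem_range] at hi
      by_contra hodd
      obtain ⟨c, d, hcd, hc, hsum⟩ := odd_term hi (by omega)
      have he1 : (2:ℕ) ^ (e + 1) = 2 * 2 ^ e := by ring
      exact two_pow_add_ne_two_pow hcd (e := e + 1) (by omega)
    rw [Finset.sum_congr rfl hz]
    simp
  have hcc := mod_four_one_of_odd ((catalan_mod_two n).2 ⟨e, h⟩)
  omega

lemma catalan_odd_mod_four_P2 {n a b : ℕ} (hab : a < b) (h : n + 1 = 2 ^ a + 2 ^ b) :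
    catalan (2 * n + 1) % 4 = 2 := by
  have heq := catalan_odd_eq n
  have hpa : (2:ℕ) ^ (a + 1) = 2 * 2 ^ a := by ring
  have hpb : (2:ℕ) ^ (b + 1) = 2 * 2 ^ b := by ring
  have hb1 : (2:ℕ) ^ a < 2 ^ b := Nat.pow_lt_pow_right one_lt_two hab
  have ha0 := two_pow_pos' a
  have hi0 : 2 ^ (a + 1) - 1 < n := by omega
  have hSmod : (∑ i ∈ Finset.range n, catalan i * catalan (2 * n - i)) % 2 = 1 := by
    rw [Finset.sum_nat_mod]
    have hz : ∀ i ∈ Finset.range n, catalan i * catalan (2 * n - i) % 2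
        = if i = 2 ^ (a + 1) - 1 then 1 else 0 := by
      intro i hi
      simp only [Finset.mem_range] at hi
      split_ifs with hie
      · subst hie
        rw [Nat.mul_mod]
        have h1 : catalan (2 ^ (a + 1) - 1) % 2 = 1 :=
          (catalan_mod_two _).2 ⟨a + 1, by omega⟩
        have h2 : catalan (2 * n - (2 ^ (a + 1) - 1)) % 2 = 1 :=
          (catalan_mod_two _).2 ⟨b + 1, by omega⟩
        rw [h1, h2]
      · by_contra hodd
        obtain ⟨c, d, hcd, hc, hsum⟩ := odd_term hi (by omega)
        have h2n : 2 * n + 2 = 2 ^ (a + 1) + 2 ^ (b + 1) := by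
          rw [hpa, hpb]; omega
        have hkey : 2 ^ c + 2 ^ d = 2 ^ (a + 1) + 2 ^ (b + 1) := by omega
        obtain ⟨hca, -⟩ := two_pow_add_unique hcd (show a + 1 < b + 1 by omega) hkey
        subst hca
        exact hie (by omega)
    rw [Finset.sum_congr rfl hz, Finset.sum_ite_eq' (Finset.range n) (2 ^ (a + 1) - 1)
      (fun _ => 1)]
    simp [hi0]
  have hce : catalan n % 2 = 0 := by
    rcases Nat.mod_two_eq_zero_or_one (catalan n) with hh | hh
    · exact hh
    · obtain ⟨e, he⟩ := (catalan_mod_two n).1 hh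
      exact absurd (by omega : 2 ^ a + 2 ^ b = 2 ^ e) (two_pow_add_ne_two_pow hab)
  have hcc := mod_four_zero_of_even hce
  omega

lemma catalan_odd_mod_four_P0 {n : ℕ} (h1 : ¬ ∃ e, n + 1 = 2 ^ e)
    (h2 : ¬ ∃ a b, a < b ∧ n + 1 = 2 ^ a + 2 ^ b) : catalan (2 * n + 1) % 4 = 0 := by
  have heq := catalan_odd_eq n
  have hSmod : (∑ i ∈ Finset.range n, catalan i * catalan (2 * n - i)) % 2 = 0 := by
    rw [Finset.sum_nat_mod]
    have hz : ∀ i ∈ Finset.range n, catalan i * catalan (2 * n - i) % 2 = 0 := by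
      intro i hi
      simp only [Finset.mem_range] at hi
      by_contra hodd
      obtain ⟨c, d, hcd, hc, hsum⟩ := odd_term hi (by omega)
      rcases d with _ | d'
      · omega
      rcases c with _ | c'
      · have : (2:ℕ) ^ (d' + 1) = 2 * 2 ^ d' := by ring
        omega
      · have hc' : (2:ℕ) ^ (c' + 1) = 2 * 2 ^ c' := by ring
        have hd' : (2:ℕ) ^ (d' + 1) = 2 * 2 ^ d' := by ring
        exact h2 ⟨c', d', by omega, by omega⟩
    rw [Finset.sum_congr rfl hz]
    simp
  have hce : catalan n % 2 = 0 := by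
    rcases Nat.mod_two_eq_zero_or_one (catalan n) with hh | hh
    · exact hh
    · exact absurd ((catalan_mod_two n).1 hh) h1
  have hcc := mod_four_zero_of_even hce
  omega

lemma catalan_even_term {n i : ℕ} (hi : i ≤ n) (h : catalan i * catalan (2 * n + 1 - i) % 2 = 1) :
    i = 0 ∧ ∃ e, n + 1 = 2 ^ e := by
  rw [Nat.mul_mod] at h
  have h1 : catalan i % 2 = 1 := by
    rcases Nat.mod_two_eq_zero_or_one (catalan i) with hh | hh
    · rw [hh] at h; simp at h
    · exact hh
  have h2 : catalan (2 * n + 1 - i) % 2 = 1 := by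
    rcases Nat.mod_two_eq_zero_or_one (catalan (2 * n + 1 - i)) with hh | hh
    · rw [hh] at h; simp at h
    · exact hh
  obtain ⟨c, hc⟩ := (catalan_mod_two i).1 h1
  obtain ⟨d, hd⟩ := (catalan_mod_two _).1 h2
  have hsum : 2 ^ c + 2 ^ d = 2 * n + 3 := by omega
  rcases c with _ | c'
  · have hi0 : i = 0 := by omega
    rcases d with _ | e
    · omega
    · rw [pow_succ] at hsum
      exact ⟨hi0, e, by omega⟩
  · rcases d with _ | d'
    · omega
    · rw [pow_succ] at hsum
      rw [pow_succ] at hsum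
      omega

lemma catalan_even_mod_four_P {n e : ℕ} (h : n + 1 = 2 ^ e) : catalan (2 * n + 2) % 4 = 2 := by
  have heq := catalan_even_eq n
  have hT : (∑ i ∈ Finset.range (n + 1), catalan i * catalan (2 * n + 1 - i)) % 2 = 1 := by
    rw [Finset.sum_nat_mod]
    have hz : ∀ i ∈ Finset.range (n + 1), catalan i * catalan (2 * n + 1 - i) % 2
        = if i = 0 then 1 else 0 := by
      intro i hi
      simp only [Finset.mem_range] at hi
      split_ifs with hie
      · subst hie
        simp only [Nat.sub_zero, catalan_zero, one_mul]
        exact (catalan_mod_two _).2 ⟨e + 1, by rw [pow_succ]; omega⟩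
      · by_contra hodd
        exact hie (catalan_even_term (show i ≤ n by omega) (by omega)).1
    rw [Finset.sum_congr rfl hz, Finset.sum_ite_eq' (Finset.range (n + 1)) 0 (fun _ => 1)]
    simp
  omega

lemma catalan_even_mod_four_P0 {n : ℕ} (h : ¬ ∃ e, n + 1 = 2 ^ e) :
    catalan (2 * n + 2) % 4 = 0 := by
  have heq := catalan_even_eq n
  have hT : (∑ i ∈ Finset.range (n + 1), catalan i * catalan (2 * n + 1 - i)) % 2 = 0 := by
    rw [Finset.sum_nat_mod]
    have hz : ∀ i ∈ Finset.range (n + 1), catalan i * catalan (2 * n + 1 - i) % 2 = 0 := by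
      intro i hi
      simp only [Finset.mem_range] at hi
      by_contra hodd
      exact h (catalan_even_term (show i ≤ n by omega) (by omega)).2
    rw [Finset.sum_congr rfl hz]
    simp
  omega

lemma cond1_iff (n : ℕ) : (∃ a : ℕ, n = 2 ^ a - 1) ↔ (∃ a : ℕ, n + 1 = 2 ^ a) := by
  constructor
  · rintro ⟨a, ha⟩
    have := two_pow_pos' a
    exact ⟨a, by omega⟩
  · rintro ⟨a, ha⟩
    exact ⟨a, by omega⟩

lemma cond2_iff (n : ℕ) : (∃ a b : ℕ, a < b ∧ n = 2 ^ a + 2 ^ b - 1) ↔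
    (∃ a b : ℕ, a < b ∧ n + 1 = 2 ^ a + 2 ^ b) := by
  constructor
  · rintro ⟨a, b, hab, ha⟩
    have := two_pow_pos' a
    have := two_pow_pos' b
    exact ⟨a, b, hab, by omega⟩
  · rintro ⟨a, b, hab, ha⟩
    exact ⟨a, b, hab, by omega⟩

/-- `C_n mod 4` is `1` if `n = 2^a - 1`, is `2` if `n = 2^a + 2^b - 1` with `b > a`,
and is `0` otherwise. -/
theorem catalan_mod_four (n : ℕ) :
    ((∃ a : ℕ, n = 2 ^ a - 1) → catalan n % 4 = 1) ∧
    ((∃ a b : ℕ, a < b ∧ n = 2 ^ a + 2 ^ b - 1) → catalan n % 4 = 2) ∧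
    ((¬ ∃ a : ℕ, n = 2 ^ a - 1) → (¬ ∃ a b : ℕ, a < b ∧ n = 2 ^ a + 2 ^ b - 1) →
      catalan n % 4 = 0) := by
  rw [cond1_iff, cond2_iff]
  obtain ⟨k, hk | hk⟩ := Nat.even_or_odd' n
  · rcases k with _ | j
    · -- n = 0
      subst hk
      have hcat : catalan 0 % 4 = 1 := by rw [catalan_zero]
      refine ⟨fun _ => hcat, ?_, ?_⟩
      · rintro ⟨a, b, hab, hs⟩
        exfalso
        have := two_pow_pos' a
        have hb2 : 2 ≤ 2 ^ b := by
          calc 2 = 2 ^ 1 := rfl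
          _ ≤ 2 ^ b := Nat.pow_le_pow_right (by omega) (by omega)
        omega
      · intro h1 h2
        exact absurd ⟨0, by norm_num⟩ h1
    · -- n = 2j + 2
      have hn : n = 2 * j + 2 := by omega
      subst hn
      refine ⟨?_, ?_, ?_⟩
      · rintro ⟨a, ha⟩
        exfalso
        rcases a with _ | e
        · omega
        · rw [pow_succ] at ha; omega
      · rintro ⟨a, b, hab, hs⟩
        rcases a with _ | a'
        · rcases b with _ | e
          · omega
          · rw [pow_succ] at hs
            exact catalan_even_mod_four_P (show j + 1 = 2 ^ e by omega)
        · rcases b with _ | b'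
          · omega
          · rw [pow_succ, pow_succ] at hs
            omega
      · intro h1 h2
        apply catalan_even_mod_four_P0
        rintro ⟨e, he⟩
        exact h2 ⟨0, e + 1, by omega, by rw [pow_succ]; omega⟩
  · -- n = 2k + 1
    subst hk
    refine ⟨?_, ?_, ?_⟩
    · rintro ⟨a, ha⟩
      rcases a with _ | e
      · omega
      · rw [pow_succ] at ha
        exact catalan_odd_mod_four_P1 (show k + 1 = 2 ^ e by omega)
    · rintro ⟨a, b, hab, hs⟩
      rcases b with _ | b'
      · omega
      rcases a with _ | a'
      · rw [pow_succ] at hs; omega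
      · rw [pow_succ, pow_succ] at hs
        exact catalan_odd_mod_four_P2 (show a' < b' by omega)
          (show k + 1 = 2 ^ a' + 2 ^ b' by omega)
    · intro h1 h2
      apply catalan_odd_mod_four_P0
      · rintro ⟨e, he⟩
        exact h1 ⟨e + 1, by rw [pow_succ]; omega⟩
      · rintro ⟨a, b, hab, hs⟩
        exact h2 ⟨a + 1, b + 1, by omega, by rw [pow_succ, pow_succ]; omega⟩
end

section
/- If p ≥ 5 is prime and n ≡ -2 (mod p), then C_n ≡ 0 (mod p). -/
/-- If `p ≥ 5` is prime and `n ≡ -2 (mod p)`, then `C_n ≡ 0 (mod p)`. -/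
theorem catalan_mod_p (p n : ℕ) (hp : p.Prime) (hp5 : 5 ≤ p) (h : p ∣ n + 2) :
    p ∣ catalan n := by
  haveI : Fact p.Prime := ⟨hp⟩
  obtain ⟨q, hq⟩ := h
  have hq' : q ≠ 0 := by rintro rfl; omega
  obtain ⟨r, rfl⟩ : ∃ r, q = r + 1 := ⟨q - 1, by omega⟩
  have hq1 : n + 2 = p * r + p := by rw [hq]; ring
  have hmod : n % p = p - 2 := by
    have hn : n = p * r + (p - 2) := by omega
    rw [hn, Nat.mul_add_mod, Nat.mod_eq_of_lt (by omega)]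
  have h2mod : 2 * n % p = p - 4 := by
    have hn2 : 2 * n = p * (2 * r + 1) + (p - 4) := by
      have : p * (2 * r + 1) = 2 * (p * r) + p := by ring
      omega
    rw [hn2, Nat.mul_add_mod, Nat.mod_eq_of_lt (by omega)]
  have hcb : p ∣ Nat.centralBinom n := by
    have hl := Choose.choose_modEq_choose_mod_mul_choose_div_nat (p := p)
      (n := 2 * n) (k := n)
    unfold Nat.ModEq at hl
    have hz : Nat.choose (p - 4) (p - 2) = 0 := Nat.choose_eq_zero_of_lt (by omega)
    rw [h2mod, hmod, hz, Nat.zero_mul, Nat.zero_mod] at hl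
    rw [Nat.centralBinom]
    omega
  have hkey := succ_mul_catalan_eq_centralBinom n
  have hcop : ¬ p ∣ (n + 1) := by
    intro hd
    have h2 : p ∣ n + 2 := ⟨r + 1, hq⟩
    have hd1 := Nat.dvd_sub h2 hd
    have e : n + 2 - (n + 1) = 1 := by omega
    rw [e] at hd1
    have := Nat.le_of_dvd one_pos hd1
    omega
  have : p ∣ (n + 1) * catalan n := by rw [hkey]; exact hcb
  exact (hp.dvd_mul.mp this).resolve_left hcop
end

section
/- For n ≥ 3, C_{n-2} = (n/2) * C_{n/2-1}^2 + ∑ m_{ijk} * C_{i-1} * C_{j-1} * C_{k-1}, where the sum is over triples (i,j,k) of positive integers with i + j + k = n, i ≤ j ≤ k < n/2; here m_{ijk} = n/3 if i = j = k, m_{ijk} = n if exactly two of i, j, k are equal, and m_{ijk} = 2n if i < j < k. The term (n/2) * C_{n/2-1}^2 is interpreted as 0 when n is odd. -/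
open Finset

set_option maxHeartbeats 1600000

namespace CatalanCentral

def ccc (t : ℕ × ℕ × ℕ) : ℕ := catalan (t.1 - 1) * catalan (t.2.1 - 1) * catalan (t.2.2 - 1)

lemma ccc_def (t : ℕ × ℕ × ℕ) :
    ccc t = catalan (t.1 - 1) * catalan (t.2.1 - 1) * catalan (t.2.2 - 1) := rfl

def sort3 (t : ℕ × ℕ × ℕ) : ℕ × ℕ × ℕ :=
  (min t.1 (min t.2.1 t.2.2),
   t.1 + t.2.1 + t.2.2 - min t.1 (min t.2.1 t.2.2) - max t.1 (max t.2.1 t.2.2),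
   max t.1 (max t.2.1 t.2.2))

lemma conv_catalan (m : ℕ) :
    ∑ k ∈ Finset.range (m+1), catalan k * catalan (m - k) = catalan (m+1) := by
  rw [catalan_succ]
  exact (Fin.sum_univ_eq_sum_range (fun i => catalan i * catalan (m - i)) (m+1)).symm

lemma cat_rec (m : ℕ) : (m+2) * catalan (m+1) = 2*(2*m+1) * catalan m := by
  have h1 := succ_mul_catalan_eq_centralBinom (m+1)
  have h2 := Nat.succ_mul_centralBinom_succ m
  have h3 := succ_mul_catalan_eq_centralBinom m
  nlinarith [h1, h2, h3]

lemma half_conv (m : ℕ) :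
    2 * ∑ k ∈ (range (m+1)).filter (fun k => m ≤ 2*k), (catalan k * catalan (m-k))
      = catalan (m+1) + (if m % 2 = 0 then catalan (m/2)^2 else 0) := by
  set f : ℕ → ℕ := fun k => catalan k * catalan (m-k) with hf
  have hconv : ∑ k ∈ range (m+1), f k = catalan (m+1) := by
    rw [catalan_succ]
    exact (Fin.sum_univ_eq_sum_range (fun i => catalan i * catalan (m - i)) (m+1)).symm
  have hsplit : ∑ k ∈ range (m+1), f k
      = (∑ k ∈ (range (m+1)).filter (fun k => 2*k < m), f k)
        + ∑ k ∈ (range (m+1)).filter (fun k => m ≤ 2*k), f k := by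
    rw [← Finset.sum_filter_add_sum_filter_not (range (m+1)) (fun k => 2*k < m) f]
    congr 2
    apply Finset.filter_congr; intro k _; simp [not_lt]
  have hrefl : ∑ k ∈ (range (m+1)).filter (fun k => 2*k < m), f k
      = ∑ k ∈ (range (m+1)).filter (fun k => m < 2*k), f k := by
    apply Finset.sum_nbij' (i := fun k => m - k) (j := fun k => m - k)
    · intro a ha; simp at ha ⊢; omega
    · intro a ha; simp at ha ⊢; omega
    · intro a ha; simp at ha ⊢; omega
    · intro a ha; simp at ha ⊢; omega
    · intro a ha; simp at ha
      simp only [hf]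
      have : m - (m - a) = a := by omega
      rw [this, mul_comm]
  have hsplit2 : ∑ k ∈ (range (m+1)).filter (fun k => m ≤ 2*k), f k
      = (∑ k ∈ (range (m+1)).filter (fun k => m < 2*k), f k)
        + ∑ k ∈ (range (m+1)).filter (fun k => m = 2*k), f k := by
    rw [← Finset.sum_filter_add_sum_filter_not ((range (m+1)).filter (fun k => m ≤ 2*k)) (fun k => m < 2*k) f,
      Finset.filter_filter, Finset.filter_filter]
    congr 2
    · apply Finset.filter_congr; intro k _; simp; omega
    · apply Finset.filter_congr; intro k _; simp; omega
  have hmid : ∑ k ∈ (range (m+1)).filter (fun k => m = 2*k), f k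
      = if m % 2 = 0 then catalan (m/2)^2 else 0 := by
    by_cases h : m % 2 = 0
    · have : (range (m+1)).filter (fun k => m = 2*k) = {m/2} := by
        apply Finset.ext; intro k; simp; omega
      rw [this, Finset.sum_singleton, if_pos h]
      show catalan (m/2) * catalan (m - m/2) = _
      have h2 : m - m/2 = m/2 := by omega
      rw [h2, sq]
    · have : (range (m+1)).filter (fun k => m = 2*k) = ∅ := by
        apply Finset.ext; intro k; simp; omega
      rw [this, Finset.sum_empty, if_neg h]
  have goal : 2 * ∑ k ∈ (range (m+1)).filter (fun k => m ≤ 2*k), f k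
      = catalan (m+1) + (if m % 2 = 0 then catalan (m/2)^2 else 0) := by omega
  exact goal

lemma double_conv (n r : ℕ) (hrn : r ≤ n) :
    ∑ i ∈ Icc 1 n, ∑ j ∈ Icc 1 n, (if i + j = r then catalan (i-1) * catalan (j-1) else 0)
      = if 2 ≤ r then catalan (r-1) else 0 := by
  by_cases h2 : 2 ≤ r
  · rw [if_pos h2]
    have inner : ∀ i ∈ Icc 1 n,
        (∑ j ∈ Icc 1 n, if i + j = r then catalan (i-1) * catalan (j-1) else 0)
        = if i ≤ r - 1 then catalan (i-1) * catalan (r-i-1) else 0 := by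
      intro i hi
      simp only [Finset.mem_Icc] at hi
      by_cases hir : i ≤ r - 1
      · rw [if_pos hir]
        have : ∀ j ∈ Icc 1 n, (if i + j = r then catalan (i-1) * catalan (j-1) else 0)
            = if j = r - i then catalan (i-1) * catalan (j-1) else 0 := by
          intro j hj; simp only [Finset.mem_Icc] at hj
          congr 1
          simp only [eq_iff_iff]; omega
        rw [Finset.sum_congr rfl this, Finset.sum_ite_eq' (Icc 1 n) (r - i)]
        rw [if_pos (by simp only [Finset.mem_Icc]; omega)]
      · rw [if_neg hir]
        apply Finset.sum_eq_zero
        intro j hj; simp only [Finset.mem_Icc] at hj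
        rw [if_neg (by omega)]
    rw [Finset.sum_congr rfl inner, ← Finset.sum_filter]
    have hfil : (Icc 1 n).filter (fun i => i ≤ r - 1) = Icc 1 (r-1) := by
      apply Finset.ext; intro k
      simp only [Finset.mem_filter, Finset.mem_Icc]; omega
    rw [hfil]
    have := conv_catalan (r - 2)
    have hr1 : r - 2 + 1 = r - 1 := by omega
    rw [hr1] at this
    rw [← this]
    apply Finset.sum_nbij' (i := fun i => i - 1) (j := fun p => p + 1)
    · intro a ha; simp only [Finset.mem_Icc] at ha; simp only [Finset.mem_range]; omega
    · intro a ha; simp only [Finset.mem_range] at ha; simp only [Finset.mem_Icc]; omega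
    · intro a ha; simp only [Finset.mem_Icc] at ha; omega
    · intro a ha; simp only [Finset.mem_range] at ha; omega
    · intro a ha; simp only [Finset.mem_Icc] at ha
      congr 2
      omega
  · rw [if_neg h2]
    apply Finset.sum_eq_zero; intro i hi
    apply Finset.sum_eq_zero; intro j hj
    simp only [Finset.mem_Icc] at hi hj
    rw [if_neg (by omega)]

lemma triple_sum (n : ℕ) (hn : 3 ≤ n) (q : ℕ → Prop) [DecidablePred q] :
    ∑ t ∈ (Finset.Icc 1 n ×ˢ Finset.Icc 1 n ×ˢ Finset.Icc 1 n).filter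
        (fun t => t.1 + t.2.1 + t.2.2 = n ∧ q t.1),
      (catalan (t.1 - 1) * catalan (t.2.1 - 1) * catalan (t.2.2 - 1))
    = ∑ i ∈ (Icc 1 (n-2)).filter q, catalan (i-1) * catalan (n-i-1) := by
  rw [Finset.sum_filter]
  rw [Finset.sum_product]
  simp only [Finset.sum_product]
  have step : ∀ i ∈ Icc 1 n,
      (∑ j ∈ Icc 1 n, ∑ k ∈ Icc 1 n,
        if i + j + k = n ∧ q i then catalan (i-1) * catalan (j-1) * catalan (k-1) else 0)
      = if q i ∧ i ≤ n - 2 then catalan (i-1) * catalan (n-i-1) else 0 := by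
    intro i hi
    simp only [Finset.mem_Icc] at hi
    by_cases hq : q i
    · have congr1 : ∀ j ∈ Icc 1 n, ∀ k ∈ Icc 1 n,
          (if i + j + k = n ∧ q i then catalan (i-1) * catalan (j-1) * catalan (k-1) else 0)
          = catalan (i-1) * (if j + k = n - i then catalan (j-1) * catalan (k-1) else 0) := by
        intro j hj k hk
        simp only [Finset.mem_Icc] at hj hk
        by_cases h : i + j + k = n
        · rw [if_pos ⟨h, hq⟩, if_pos (by omega)]; ring
        · rw [if_neg (by tauto), if_neg (by omega), mul_zero]
      calc (∑ j ∈ Icc 1 n, ∑ k ∈ Icc 1 n,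
            if i + j + k = n ∧ q i then catalan (i-1) * catalan (j-1) * catalan (k-1) else 0)
          = ∑ j ∈ Icc 1 n, ∑ k ∈ Icc 1 n,
            catalan (i-1) * (if j + k = n - i then catalan (j-1) * catalan (k-1) else 0) := by
            refine Finset.sum_congr rfl fun j hj => Finset.sum_congr rfl fun k hk => ?_
            exact congr1 j hj k hk
        _ = catalan (i-1) * ∑ j ∈ Icc 1 n, ∑ k ∈ Icc 1 n,
            (if j + k = n - i then catalan (j-1) * catalan (k-1) else 0) := by
            rw [Finset.mul_sum]
            refine Finset.sum_congr rfl fun j hj => ?_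
            rw [Finset.mul_sum]
        _ = catalan (i-1) * (if 2 ≤ n - i then catalan (n-i-1) else 0) := by
            rw [double_conv n (n - i) (by omega)]
        _ = if q i ∧ i ≤ n - 2 then catalan (i-1) * catalan (n-i-1) else 0 := by
            by_cases h : 2 ≤ n - i
            · rw [if_pos h, if_pos ⟨hq, by omega⟩]
            · rw [if_neg h, if_neg (by omega), mul_zero]
    · rw [if_neg (by tauto)]
      apply Finset.sum_eq_zero; intro j hj
      apply Finset.sum_eq_zero; intro k hk
      rw [if_neg (by tauto)]
  rw [Finset.sum_congr rfl step, ← Finset.sum_filter]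
  congr 1
  apply Finset.ext; intro k
  simp only [Finset.mem_filter, Finset.mem_Icc]
  constructor
  · rintro ⟨⟨h1, h2⟩, hq, h3⟩; exact ⟨⟨h1, h3⟩, hq⟩
  · rintro ⟨⟨h1, h3⟩, hq⟩; exact ⟨⟨h1, by omega⟩, hq, h3⟩

lemma swap23 (n : ℕ) :
    ∑ t ∈ (Finset.Icc 1 n ×ˢ Finset.Icc 1 n ×ˢ Finset.Icc 1 n).filter
        (fun t => t.1 + t.2.1 + t.2.2 = n ∧ n ≤ 2 * t.2.2), ccc t
    = ∑ t ∈ (Finset.Icc 1 n ×ˢ Finset.Icc 1 n ×ˢ Finset.Icc 1 n).filter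
        (fun t => t.1 + t.2.1 + t.2.2 = n ∧ n ≤ 2 * t.1), ccc t := by
  apply Finset.sum_nbij' (i := fun t => (t.2.2, t.2.1, t.1)) (j := fun t => (t.2.2, t.2.1, t.1))
  · rintro ⟨p, q, r⟩ ha
    simp only [Finset.mem_filter, Finset.mem_product, Finset.mem_Icc] at ha ⊢
    omega
  · rintro ⟨p, q, r⟩ ha
    simp only [Finset.mem_filter, Finset.mem_product, Finset.mem_Icc] at ha ⊢
    omega
  · rintro ⟨p, q, r⟩ _; rfl
  · rintro ⟨p, q, r⟩ _; rfl
  · rintro ⟨p, q, r⟩ _; simp only [ccc]; ring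

lemma swap12 (n : ℕ) :
    ∑ t ∈ (Finset.Icc 1 n ×ˢ Finset.Icc 1 n ×ˢ Finset.Icc 1 n).filter
        (fun t => t.1 + t.2.1 + t.2.2 = n ∧ n ≤ 2 * t.2.1), ccc t
    = ∑ t ∈ (Finset.Icc 1 n ×ˢ Finset.Icc 1 n ×ˢ Finset.Icc 1 n).filter
        (fun t => t.1 + t.2.1 + t.2.2 = n ∧ n ≤ 2 * t.1), ccc t := by
  apply Finset.sum_nbij' (i := fun t => (t.2.1, t.1, t.2.2)) (j := fun t => (t.2.1, t.1, t.2.2))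
  · rintro ⟨p, q, r⟩ ha
    simp only [Finset.mem_filter, Finset.mem_product, Finset.mem_Icc] at ha ⊢
    omega
  · rintro ⟨p, q, r⟩ ha
    simp only [Finset.mem_filter, Finset.mem_product, Finset.mem_Icc] at ha ⊢
    omega
  · rintro ⟨p, q, r⟩ _; rfl
  · rintro ⟨p, q, r⟩ _; rfl
  · rintro ⟨p, q, r⟩ _; simp only [ccc]; ring

lemma partition_sum (n : ℕ) (hn : 3 ≤ n) :
    ∑ t ∈ (Finset.Icc 1 n ×ˢ Finset.Icc 1 n ×ˢ Finset.Icc 1 n).filter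
        (fun t => t.1 + t.2.1 + t.2.2 = n), ccc t
    = (∑ t ∈ (Finset.Icc 1 n ×ˢ Finset.Icc 1 n ×ˢ Finset.Icc 1 n).filter
        (fun t => t.1 + t.2.1 + t.2.2 = n ∧ 2*t.1 < n ∧ 2*t.2.1 < n ∧ 2*t.2.2 < n), ccc t)
      + 3 * ∑ t ∈ (Finset.Icc 1 n ×ˢ Finset.Icc 1 n ×ˢ Finset.Icc 1 n).filter
        (fun t => t.1 + t.2.1 + t.2.2 = n ∧ n ≤ 2 * t.1), ccc t := by
  set S3 := Finset.Icc 1 n ×ˢ Finset.Icc 1 n ×ˢ Finset.Icc 1 n with hS3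
  have e1 : ∑ t ∈ S3.filter (fun t => t.1 + t.2.1 + t.2.2 = n), ccc t
      = (∑ t ∈ S3.filter (fun t => t.1 + t.2.1 + t.2.2 = n ∧ n ≤ 2*t.1), ccc t)
        + ∑ t ∈ S3.filter (fun t => t.1 + t.2.1 + t.2.2 = n ∧ 2*t.1 < n), ccc t := by
    rw [← Finset.sum_filter_add_sum_filter_not (S3.filter (fun t => t.1 + t.2.1 + t.2.2 = n))
        (fun t => n ≤ 2*t.1) ccc, Finset.filter_filter, Finset.filter_filter]
    congr 2
    apply Finset.filter_congr; intro t _; simp only [not_le]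
  have e2 : ∑ t ∈ S3.filter (fun t => t.1 + t.2.1 + t.2.2 = n ∧ 2*t.1 < n), ccc t
      = (∑ t ∈ S3.filter (fun t => (t.1 + t.2.1 + t.2.2 = n ∧ 2*t.1 < n) ∧ n ≤ 2*t.2.1), ccc t)
        + ∑ t ∈ S3.filter (fun t => (t.1 + t.2.1 + t.2.2 = n ∧ 2*t.1 < n) ∧ 2*t.2.1 < n), ccc t := by
    rw [← Finset.sum_filter_add_sum_filter_not
        (S3.filter (fun t => t.1 + t.2.1 + t.2.2 = n ∧ 2*t.1 < n))
        (fun t => n ≤ 2*t.2.1) ccc, Finset.filter_filter, Finset.filter_filter]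
    congr 2
    apply Finset.filter_congr; intro t _; simp only [not_le]
  have e3 : ∑ t ∈ S3.filter (fun t => (t.1 + t.2.1 + t.2.2 = n ∧ 2*t.1 < n) ∧ 2*t.2.1 < n), ccc t
      = (∑ t ∈ S3.filter (fun t => ((t.1 + t.2.1 + t.2.2 = n ∧ 2*t.1 < n) ∧ 2*t.2.1 < n) ∧ n ≤ 2*t.2.2), ccc t)
        + ∑ t ∈ S3.filter (fun t => ((t.1 + t.2.1 + t.2.2 = n ∧ 2*t.1 < n) ∧ 2*t.2.1 < n) ∧ 2*t.2.2 < n), ccc t := by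
    rw [← Finset.sum_filter_add_sum_filter_not
        (S3.filter (fun t => (t.1 + t.2.1 + t.2.2 = n ∧ 2*t.1 < n) ∧ 2*t.2.1 < n))
        (fun t => n ≤ 2*t.2.2) ccc, Finset.filter_filter, Finset.filter_filter]
    congr 2
    apply Finset.filter_congr; intro t _; simp only [not_le]
  have f2 : S3.filter (fun t => (t.1 + t.2.1 + t.2.2 = n ∧ 2*t.1 < n) ∧ n ≤ 2*t.2.1)
      = S3.filter (fun t => t.1 + t.2.1 + t.2.2 = n ∧ n ≤ 2*t.2.1) := by
    apply Finset.filter_congr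
    rintro ⟨p, q, r⟩ ht
    simp only [Finset.mem_product, Finset.mem_Icc, hS3] at ht
    simp only [eq_iff_iff]; omega
  have f3 : S3.filter (fun t => ((t.1 + t.2.1 + t.2.2 = n ∧ 2*t.1 < n) ∧ 2*t.2.1 < n) ∧ n ≤ 2*t.2.2)
      = S3.filter (fun t => t.1 + t.2.1 + t.2.2 = n ∧ n ≤ 2*t.2.2) := by
    apply Finset.filter_congr
    rintro ⟨p, q, r⟩ ht
    simp only [Finset.mem_product, Finset.mem_Icc, hS3] at ht
    simp only [eq_iff_iff]; omega
  have f4 : S3.filter (fun t => ((t.1 + t.2.1 + t.2.2 = n ∧ 2*t.1 < n) ∧ 2*t.2.1 < n) ∧ 2*t.2.2 < n)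
      = S3.filter (fun t => t.1 + t.2.1 + t.2.2 = n ∧ 2*t.1 < n ∧ 2*t.2.1 < n ∧ 2*t.2.2 < n) := by
    apply Finset.filter_congr
    rintro ⟨p, q, r⟩ ht
    simp only [eq_iff_iff]; omega
  rw [f2] at e2
  rw [f3, f4] at e3
  have s23 := swap23 n
  have s12 := swap12 n
  rw [← hS3] at s23 s12
  omega

lemma fiber_mul (n : ℕ) (hn : 3 ≤ n) (a b c : ℕ)
    (hmem : (a, b, c) ∈ (Finset.Icc 1 n ×ˢ Finset.Icc 1 n ×ˢ Finset.Icc 1 n).filter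
      (fun t => t.1 + t.2.1 + t.2.2 = n ∧ t.1 ≤ t.2.1 ∧ t.2.1 ≤ t.2.2 ∧ 2 * t.2.2 < n)) :
    n * ∑ x ∈ ((Finset.Icc 1 n ×ˢ Finset.Icc 1 n ×ˢ Finset.Icc 1 n).filter
        (fun t => t.1 + t.2.1 + t.2.2 = n ∧ 2*t.1 < n ∧ 2*t.2.1 < n ∧ 2*t.2.2 < n)).filter
        (fun x => sort3 x = (a, b, c)), ccc x
    = 3 * ((if a = c then n / 3 else if a = b ∨ b = c then n else 2 * n) * ccc (a, b, c)) := by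
  simp only [Finset.mem_filter, Finset.mem_product, Finset.mem_Icc] at hmem
  obtain ⟨⟨⟨ha1, ha2⟩, ⟨hb1, hb2⟩, hc1, hc2⟩, hsum, hab, hbc, h2c⟩ := hmem
  by_cases hac : a = c
  · have hfib : ((Finset.Icc 1 n ×ˢ Finset.Icc 1 n ×ˢ Finset.Icc 1 n).filter
        (fun t => t.1 + t.2.1 + t.2.2 = n ∧ 2*t.1 < n ∧ 2*t.2.1 < n ∧ 2*t.2.2 < n)).filter
        (fun x => sort3 x = (a, b, c)) = {(a, b, c)} := by
      apply Finset.ext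
      rintro ⟨p, q, r⟩
      simp only [Finset.mem_filter, Finset.mem_product, Finset.mem_Icc, Finset.mem_singleton,
        sort3, Prod.mk.injEq]
      omega
    rw [hfib, Finset.sum_singleton, if_pos hac]
    have h3 : 3 * (n / 3) = n := by omega
    have : 3 * (n / 3 * ccc (a, b, c)) = 3 * (n / 3) * ccc (a, b, c) := by ring
    rw [this, h3]
  · rw [if_neg hac]
    by_cases hab' : a = b
    · have hfib : ((Finset.Icc 1 n ×ˢ Finset.Icc 1 n ×ˢ Finset.Icc 1 n).filter
          (fun t => t.1 + t.2.1 + t.2.2 = n ∧ 2*t.1 < n ∧ 2*t.2.1 < n ∧ 2*t.2.2 < n)).filter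
          (fun x => sort3 x = (a, b, c)) = {(a, b, c), (a, c, b), (c, a, b)} := by
        apply Finset.ext
        rintro ⟨p, q, r⟩
        simp only [Finset.mem_filter, Finset.mem_product, Finset.mem_Icc, Finset.mem_insert,
          Finset.mem_singleton, sort3, Prod.mk.injEq]
        omega
      have h1 : (a,b,c) ∉ ({(a,c,b),(c,a,b)} : Finset (ℕ×ℕ×ℕ)) := by
        simp only [Finset.mem_insert, Finset.mem_singleton, Prod.mk.injEq, true_and, and_true]
        omega
      have h2 : (a,c,b) ∉ ({(c,a,b)} : Finset (ℕ×ℕ×ℕ)) := by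
        simp only [Finset.mem_singleton, Prod.mk.injEq, true_and, and_true]
        omega
      rw [hfib, if_pos (Or.inl hab'), Finset.sum_insert h1, Finset.sum_insert h2,
        Finset.sum_singleton]
      subst hab'
      simp only [ccc]
      ring
    · by_cases hbc' : b = c
      · have hfib : ((Finset.Icc 1 n ×ˢ Finset.Icc 1 n ×ˢ Finset.Icc 1 n).filter
            (fun t => t.1 + t.2.1 + t.2.2 = n ∧ 2*t.1 < n ∧ 2*t.2.1 < n ∧ 2*t.2.2 < n)).filter
            (fun x => sort3 x = (a, b, c)) = {(a, b, c), (b, a, c), (b, c, a)} := by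
          apply Finset.ext
          rintro ⟨p, q, r⟩
          simp only [Finset.mem_filter, Finset.mem_product, Finset.mem_Icc, Finset.mem_insert,
            Finset.mem_singleton, sort3, Prod.mk.injEq]
          omega
        have h1 : (a,b,c) ∉ ({(b,a,c),(b,c,a)} : Finset (ℕ×ℕ×ℕ)) := by
          simp only [Finset.mem_insert, Finset.mem_singleton, Prod.mk.injEq, true_and, and_true]
          omega
        have h2 : (b,a,c) ∉ ({(b,c,a)} : Finset (ℕ×ℕ×ℕ)) := by
          simp only [Finset.mem_singleton, Prod.mk.injEq, true_and, and_true]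
          omega
        rw [hfib, if_pos (Or.inr hbc'), Finset.sum_insert h1, Finset.sum_insert h2,
          Finset.sum_singleton]
        subst hbc'
        simp only [ccc]
        ring
      · have hfib : ((Finset.Icc 1 n ×ˢ Finset.Icc 1 n ×ˢ Finset.Icc 1 n).filter
            (fun t => t.1 + t.2.1 + t.2.2 = n ∧ 2*t.1 < n ∧ 2*t.2.1 < n ∧ 2*t.2.2 < n)).filter
            (fun x => sort3 x = (a, b, c))
            = {(a, b, c), (a, c, b), (b, a, c), (b, c, a), (c, a, b), (c, b, a)} := by
          apply Finset.ext
          rintro ⟨p, q, r⟩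
          simp only [Finset.mem_filter, Finset.mem_product, Finset.mem_Icc, Finset.mem_insert,
            Finset.mem_singleton, sort3, Prod.mk.injEq]
          omega
        have h1 : (a,b,c) ∉ ({(a,c,b),(b,a,c),(b,c,a),(c,a,b),(c,b,a)} : Finset (ℕ×ℕ×ℕ)) := by
          simp only [Finset.mem_insert, Finset.mem_singleton, Prod.mk.injEq, true_and, and_true]
          omega
        have h2 : (a,c,b) ∉ ({(b,a,c),(b,c,a),(c,a,b),(c,b,a)} : Finset (ℕ×ℕ×ℕ)) := by
          simp only [Finset.mem_insert, Finset.mem_singleton, Prod.mk.injEq, true_and, and_true]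
          omega
        have h3 : (b,a,c) ∉ ({(b,c,a),(c,a,b),(c,b,a)} : Finset (ℕ×ℕ×ℕ)) := by
          simp only [Finset.mem_insert, Finset.mem_singleton, Prod.mk.injEq, true_and, and_true]
          omega
        have h4 : (b,c,a) ∉ ({(c,a,b),(c,b,a)} : Finset (ℕ×ℕ×ℕ)) := by
          simp only [Finset.mem_insert, Finset.mem_singleton, Prod.mk.injEq, true_and, and_true]
          omega
        have h5 : (c,a,b) ∉ ({(c,b,a)} : Finset (ℕ×ℕ×ℕ)) := by
          simp only [Finset.mem_singleton, Prod.mk.injEq, true_and, and_true]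
          omega
        rw [hfib, if_neg (by omega), Finset.sum_insert h1, Finset.sum_insert h2,
          Finset.sum_insert h3, Finset.sum_insert h4, Finset.sum_insert h5,
          Finset.sum_singleton]
        simp only [ccc]
        ring

lemma symmetrize (n : ℕ) (hn : 3 ≤ n) :
    n * ∑ t ∈ (Finset.Icc 1 n ×ˢ Finset.Icc 1 n ×ˢ Finset.Icc 1 n).filter
        (fun t => t.1 + t.2.1 + t.2.2 = n ∧ 2*t.1 < n ∧ 2*t.2.1 < n ∧ 2*t.2.2 < n), ccc t
    = 3 * ∑ t ∈ (Finset.Icc 1 n ×ˢ Finset.Icc 1 n ×ˢ Finset.Icc 1 n).filter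
        (fun t => t.1 + t.2.1 + t.2.2 = n ∧ t.1 ≤ t.2.1 ∧ t.2.1 ≤ t.2.2 ∧ 2 * t.2.2 < n),
      (if t.1 = t.2.2 then n / 3 else if t.1 = t.2.1 ∨ t.2.1 = t.2.2 then n else 2 * n) * ccc t := by
  have hmaps : ∀ x ∈ (Finset.Icc 1 n ×ˢ Finset.Icc 1 n ×ˢ Finset.Icc 1 n).filter
      (fun t => t.1 + t.2.1 + t.2.2 = n ∧ 2*t.1 < n ∧ 2*t.2.1 < n ∧ 2*t.2.2 < n),
      sort3 x ∈ (Finset.Icc 1 n ×ˢ Finset.Icc 1 n ×ˢ Finset.Icc 1 n).filter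
      (fun t => t.1 + t.2.1 + t.2.2 = n ∧ t.1 ≤ t.2.1 ∧ t.2.1 ≤ t.2.2 ∧ 2 * t.2.2 < n) := by
    rintro ⟨p, q, r⟩ hx
    simp only [Finset.mem_filter, Finset.mem_product, Finset.mem_Icc, sort3] at hx ⊢
    omega
  rw [← Finset.sum_fiberwise_of_maps_to hmaps ccc, Finset.mul_sum, Finset.mul_sum]
  apply Finset.sum_congr rfl
  rintro ⟨a, b, c⟩ hy
  exact fiber_mul n hn a b c hy

lemma sumB (n : ℕ) (hn : 3 ≤ n) :
    (∑ t ∈ (Finset.Icc 1 n ×ˢ Finset.Icc 1 n ×ˢ Finset.Icc 1 n).filter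
        (fun t => t.1 + t.2.1 + t.2.2 = n), ccc t) + catalan (n-2) = catalan (n-1) := by
  have h := triple_sum n hn (fun _ => True)
  simp only [and_true, Finset.filter_true] at h
  have hccc : (∑ t ∈ (Finset.Icc 1 n ×ˢ Finset.Icc 1 n ×ˢ Finset.Icc 1 n).filter
      (fun t => t.1 + t.2.1 + t.2.2 = n), ccc t)
      = ∑ t ∈ (Finset.Icc 1 n ×ˢ Finset.Icc 1 n ×ˢ Finset.Icc 1 n).filter
      (fun t => t.1 + t.2.1 + t.2.2 = n),
      (catalan (t.1 - 1) * catalan (t.2.1 - 1) * catalan (t.2.2 - 1)) := rfl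
  rw [hccc, h]
  have hconv := conv_catalan (n-2)
  rw [Finset.sum_range_succ] at hconv
  simp only [Nat.sub_self, catalan_zero, mul_one] at hconv
  have e1 : n - 2 + 1 = n - 1 := by omega
  rw [e1] at hconv
  rw [← hconv]
  congr 1
  apply Finset.sum_nbij' (i := fun i => i - 1) (j := fun p => p + 1)
  · intro a ha; simp only [Finset.mem_Icc] at ha; simp only [Finset.mem_range]; omega
  · intro a ha; simp only [Finset.mem_range] at ha; simp only [Finset.mem_Icc]; omega
  · intro a ha; simp only [Finset.mem_Icc] at ha; omega
  · intro a ha; simp only [Finset.mem_range] at ha; omega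
  · intro a ha; simp only [Finset.mem_Icc] at ha
    congr 2
    omega

lemma sumR (n : ℕ) (hn : 3 ≤ n) :
    (∑ t ∈ (Finset.Icc 1 n ×ˢ Finset.Icc 1 n ×ˢ Finset.Icc 1 n).filter
        (fun t => t.1 + t.2.1 + t.2.2 = n ∧ n ≤ 2 * t.1), ccc t) + catalan (n-2)
    = ∑ k ∈ (range (n-2+1)).filter (fun k => n - 2 ≤ 2*k), (catalan k * catalan (n-2-k)) := by
  have h := triple_sum n hn (fun i => n ≤ 2*i)
  have hccc : (∑ t ∈ (Finset.Icc 1 n ×ˢ Finset.Icc 1 n ×ˢ Finset.Icc 1 n).filter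
      (fun t => t.1 + t.2.1 + t.2.2 = n ∧ n ≤ 2 * t.1), ccc t)
      = ∑ t ∈ (Finset.Icc 1 n ×ˢ Finset.Icc 1 n ×ˢ Finset.Icc 1 n).filter
      (fun t => t.1 + t.2.1 + t.2.2 = n ∧ (fun i => n ≤ 2*i) t.1),
      (catalan (t.1 - 1) * catalan (t.2.1 - 1) * catalan (t.2.2 - 1)) := rfl
  rw [hccc, h]
  have hins : (range (n-2+1)).filter (fun k => n - 2 ≤ 2*k)
      = insert (n-2) ((range (n-2)).filter (fun k => n - 2 ≤ 2*k)) := by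
    apply Finset.ext; intro k
    simp only [Finset.mem_filter, Finset.mem_range, Finset.mem_insert]
    omega
  rw [hins, Finset.sum_insert (by simp only [Finset.mem_filter, Finset.mem_range]; omega)]
  have htop : catalan (n-2) * catalan (n-2-(n-2)) = catalan (n-2) := by
    simp [Nat.sub_self]
  rw [htop]
  have hmain : (∑ i ∈ (Icc 1 (n-2)).filter (fun i => n ≤ 2*i), catalan (i-1) * catalan (n-i-1))
      = ∑ k ∈ (range (n-2)).filter (fun k => n - 2 ≤ 2*k), (catalan k * catalan (n-2-k)) := by
    apply Finset.sum_nbij' (i := fun i => i - 1) (j := fun p => p + 1)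
    · intro a ha; simp only [Finset.mem_filter, Finset.mem_Icc] at ha
      simp only [Finset.mem_filter, Finset.mem_range]; omega
    · intro a ha; simp only [Finset.mem_filter, Finset.mem_range] at ha
      simp only [Finset.mem_filter, Finset.mem_Icc]; omega
    · intro a ha; simp only [Finset.mem_filter, Finset.mem_Icc] at ha; omega
    · intro a ha; simp only [Finset.mem_filter, Finset.mem_range] at ha; omega
    · intro a ha; simp only [Finset.mem_filter, Finset.mem_Icc] at ha
      congr 2
      omega
  rw [hmain]
  omega

lemma DE (n : ℕ) (hn : 3 ≤ n) :
    6 * (if n % 2 = 0 then (n / 2) * catalan (n / 2 - 1) ^ 2 else 0)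
    = 3 * (n * (if (n-2) % 2 = 0 then catalan ((n-2)/2)^2 else 0)) := by
  by_cases hp : n % 2 = 0
  · rw [if_pos hp, if_pos (by omega)]
    have h12 : (n-2)/2 = n/2 - 1 := by omega
    rw [h12]
    have h2 : n = 2 * (n/2) := by omega
    calc 6 * (n / 2 * catalan (n / 2 - 1) ^ 2) = 3 * (2 * (n/2) * catalan (n / 2 - 1) ^ 2) := by ring
      _ = 3 * (n * catalan (n / 2 - 1) ^ 2) := by rw [← h2]
  · rw [if_neg hp, if_neg (by omega), mul_zero, mul_zero, mul_zero]

end CatalanCentral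

/-- The central-component recursion for Catalan numbers: for `n ≥ 3`,
`C_{n-2} = (n/2) C_{n/2-1}^2 + ∑_{i+j+k=n, i ≤ j ≤ k < n/2} m_{ijk} C_{i-1} C_{j-1} C_{k-1}`,
where the first term is `0` when `n` is odd, and `m_{ijk}` is `n/3` if `i = j = k`,
`n` if exactly two of `i, j, k` are equal, and `2n` if `i < j < k`. -/
theorem catalan_central_recursion (n : ℕ) (hn : 3 ≤ n) :
    catalan (n - 2) =
      (if n % 2 = 0 then (n / 2) * catalan (n / 2 - 1) ^ 2 else 0) +
      ∑ t ∈ (Finset.Icc 1 n ×ˢ Finset.Icc 1 n ×ˢ Finset.Icc 1 n).filter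
          (fun t => t.1 + t.2.1 + t.2.2 = n ∧ t.1 ≤ t.2.1 ∧ t.2.1 ≤ t.2.2 ∧ 2 * t.2.2 < n),
        (if t.1 = t.2.2 then n / 3
          else if t.1 = t.2.1 ∨ t.2.1 = t.2.2 then n else 2 * n) *
          (catalan (t.1 - 1) * catalan (t.2.1 - 1) * catalan (t.2.2 - 1)) := by
  simp only [← CatalanCentral.ccc_def]
  have hB := CatalanCentral.sumB n hn
  have hP := CatalanCentral.partition_sum n hn
  have hR := CatalanCentral.sumR n hn
  have hsym := CatalanCentral.symmetrize n hn
  have hH := CatalanCentral.half_conv (n-2)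
  have e1 : n - 2 + 1 = n - 1 := by omega
  rw [e1] at hH hR
  have hDE := CatalanCentral.DE n hn
  have hrec : n * catalan (n-1) + 6 * catalan (n-2) = 4 * (n * catalan (n-2)) := by
    have h := CatalanCentral.cat_rec (n-2)
    rw [show n - 2 + 2 = n from by omega, e1] at h
    rw [h]
    calc 2*(2*(n-2)+1) * catalan (n-2) + 6 * catalan (n-2)
        = (2*(2*(n-2)+1) + 6) * catalan (n-2) := by ring
      _ = 4 * (n * catalan (n-2)) := by
          rw [show 2*(2*(n-2)+1) + 6 = 4*n from by omega]; ring
  -- abbreviate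
  set a := catalan (n-2) with ha
  set b := catalan (n-1) with hb
  set SB := ∑ t ∈ (Finset.Icc 1 n ×ˢ Finset.Icc 1 n ×ˢ Finset.Icc 1 n).filter
        (fun t => t.1 + t.2.1 + t.2.2 = n), CatalanCentral.ccc t with hSB
  set SA := ∑ t ∈ (Finset.Icc 1 n ×ˢ Finset.Icc 1 n ×ˢ Finset.Icc 1 n).filter
        (fun t => t.1 + t.2.1 + t.2.2 = n ∧ 2*t.1 < n ∧ 2*t.2.1 < n ∧ 2*t.2.2 < n), CatalanCentral.ccc t with hSA
  set SC := ∑ t ∈ (Finset.Icc 1 n ×ˢ Finset.Icc 1 n ×ˢ Finset.Icc 1 n).filter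
        (fun t => t.1 + t.2.1 + t.2.2 = n ∧ n ≤ 2 * t.1), CatalanCentral.ccc t with hSC
  set Sm := ∑ t ∈ (Finset.Icc 1 n ×ˢ Finset.Icc 1 n ×ˢ Finset.Icc 1 n).filter
          (fun t => t.1 + t.2.1 + t.2.2 = n ∧ t.1 ≤ t.2.1 ∧ t.2.1 ≤ t.2.2 ∧ 2 * t.2.2 < n),
        (if t.1 = t.2.2 then n / 3
          else if t.1 = t.2.1 ∨ t.2.1 = t.2.2 then n else 2 * n) * CatalanCentral.ccc t with hSm
  set H := ∑ k ∈ (range (n-1)).filter (fun k => n - 2 ≤ 2*k), (catalan k * catalan (n-2-k))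
    with hHdef
  set D := (if n % 2 = 0 then (n / 2) * catalan (n / 2 - 1) ^ 2 else 0) with hD
  set E := (if (n-2) % 2 = 0 then catalan ((n-2)/2)^2 else 0) with hE
  -- cast to integers
  have zB : (SB : ℤ) + a = b := by exact_mod_cast hB
  have zP : (SB : ℤ) = SA + 3 * SC := by exact_mod_cast hP
  have zR : (SC : ℤ) + a = H := by exact_mod_cast hR
  have zH : 2 * (H : ℤ) = b + E := by exact_mod_cast hH
  have zsym : (n : ℤ) * SA = 3 * Sm := by exact_mod_cast hsym
  have zDE : 6 * (D : ℤ) = 3 * ((n : ℤ) * E) := by exact_mod_cast hDE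
  have zrec : (n : ℤ) * b + 6 * a = 4 * ((n : ℤ) * a) := by exact_mod_cast hrec
  have h6 : 6 * (a : ℤ) = 6 * D + 6 * Sm := by
    linear_combination 2*zsym + (2*(n:ℤ))*zP - (2*(n:ℤ))*zB + (6*(n:ℤ))*zR + (3*(n:ℤ))*zH
      + zrec - zDE
  have h6' : 6 * a = 6 * (D + Sm) := by exact_mod_cast (by linarith : (6:ℤ) * a = 6 * (D + Sm))
  omega
end

section
/- The number a(n) of triangulations of a convex n-gon whose central component does not contain the vertex 0 equals ∑_{m=1}^{⌊n/2⌋ - 1} C_m * C_{n-2-m}. -/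
/-- A diagonal of a convex `n`-gon with vertices `0, 1, ..., n-1`, encoded as a pair
`(a, b)` with `a < b`, joining two non-adjacent vertices. -/
def IsDiagonal (n : ℕ) (d : ℕ × ℕ) : Prop :=
  d.2 < n ∧ d.1 + 2 ≤ d.2 ∧ d.2 + 2 ≤ d.1 + n

/-- Two diagonals (each encoded as an increasing pair) cross in the interior of the
polygon. -/
def Crossing (d e : ℕ × ℕ) : Prop :=
  (d.1 < e.1 ∧ e.1 < d.2 ∧ d.2 < e.2) ∨ (e.1 < d.1 ∧ d.1 < e.2 ∧ e.2 < d.2)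

/-- A triangulation of a convex `n`-gon: a set of `n - 3` pairwise non-crossing
diagonals. -/
def IsTriangulation (n : ℕ) (T : Finset (ℕ × ℕ)) : Prop :=
  T.card = n - 3 ∧ (∀ d ∈ T, IsDiagonal n d) ∧
    ∀ d ∈ T, ∀ e ∈ T, d ≠ e → ¬ Crossing d e

/-- The central component of the triangulation `T` (the diameter or triangle containing
the center of the regular `n`-gon) does not contain the vertex `0`: some diagonal of `T`
separates vertex `0` from the center, i.e. there is a diagonal `(a, b)` with `a ≥ 1`
whose cyclic length `b - a` is at least `n/2`. -/
def CentralAvoidsZero (n : ℕ) (T : Finset (ℕ × ℕ)) : Prop :=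
  ∃ d ∈ T, 1 ≤ d.1 ∧ n ≤ 2 * (d.2 - d.1)

attribute [local instance] Classical.propDecidable

lemma crossing_symm {d e : ℕ × ℕ} : Crossing d e ↔ Crossing e d := by
  unfold Crossing; tauto

/-- pairwise non-crossing -/
def NC (T : Finset (ℕ × ℕ)) : Prop :=
  ∀ d ∈ T, ∀ e ∈ T, d ≠ e → ¬ Crossing d e

lemma NC_mono {S T : Finset (ℕ × ℕ)} (h : S ⊆ T) (hT : NC T) : NC S :=
  fun d hd e he hne => hT d (h hd) e (h he) hne

/-- chords of the polygon with vertex set `a, a+1, ..., b` (the pair `(a,b)` is the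
long edge, not a chord) -/
def chords (a b : ℕ) : Finset (ℕ × ℕ) :=
  (Finset.range (b + 1) ×ˢ Finset.range (b + 1)).filter
    (fun d => a ≤ d.1 ∧ d.1 + 2 ≤ d.2 ∧ d.2 ≤ b ∧ ¬(d.1 = a ∧ d.2 = b))

lemma mem_chords {a b : ℕ} {d : ℕ × ℕ} :
    d ∈ chords a b ↔ a ≤ d.1 ∧ d.1 + 2 ≤ d.2 ∧ d.2 ≤ b ∧ ¬(d.1 = a ∧ d.2 = b) := by
  simp only [chords, Finset.mem_filter, Finset.mem_product, Finset.mem_range]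
  constructor
  · rintro ⟨-, h⟩; exact h
  · rintro ⟨h1, h2, h3, h4⟩; exact ⟨⟨by omega, by omega⟩, h1, h2, h3, h4⟩

lemma chords_mono {a b a' b' : ℕ} (ha : a ≤ a') (hb : b' ≤ b) (hne : a < a' ∨ b' < b) :
    chords a' b' ⊆ chords a b := by
  intro d hd
  rw [mem_chords] at hd ⊢
  omega

/-- Any non-crossing set of chords of the polygon `[a,b]` has at most `b - a - 2`
elements. -/
lemma nc_bound : ∀ k a b S, b - a ≤ k → S ⊆ chords a b → NC S → S.card ≤ b - a - 2 := by
  intro k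
  induction k with
  | zero =>
    intro a b S hk hsub _
    have : S = ∅ := by
      rw [Finset.eq_empty_iff_forall_notMem]
      intro d hd
      have := mem_chords.1 (hsub hd)
      omega
    simp [this]
  | succ k ih =>
    intro a b S hk hsub hnc
    rcases S.eq_empty_or_nonempty with rfl | hS
    · simp
    obtain ⟨c, hc, hmax⟩ := Finset.exists_max_image S (fun d => d.2 - d.1) hS
    have hcm := mem_chords.1 (hsub hc)
    -- split point w
    obtain ⟨w, hw1, hw2, hsplit⟩ :
        ∃ w, a < w ∧ w < b ∧ ∀ d ∈ S, d.2 ≤ w ∨ w ≤ d.1 := by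
      rcases lt_or_ge a c.1 with h | h
      · refine ⟨c.1, h, by omega, ?_⟩
        intro d hd
        by_contra hcon
        push_neg at hcon
        have hne : d ≠ c := by
          intro h'; subst h'; omega
        have hx := hnc c hc d hd (Ne.symm hne)
        have hdm := mem_chords.1 (hsub hd)
        have := hmax d hd
        unfold Crossing at hx
        omega
      · have h1 : c.1 = a := by omega
        refine ⟨c.2, by omega, by omega, ?_⟩
        intro d hd
        by_contra hcon
        push_neg at hcon
        have hne : d ≠ c := by
          intro h'; subst h'; omega
        have hx := hnc c hc d hd (Ne.symm hne)
        have hdm := mem_chords.1 (hsub hd)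
        have := hmax d hd
        unfold Crossing at hx
        omega
    set S1 := S.filter (fun d => d.2 ≤ w) with hS1
    set S2 := S.filter (fun d => ¬ d.2 ≤ w) with hS2
    have hcard : S.card = S1.card + S2.card := (Finset.card_filter_add_card_filter_not _).symm
    have hb1 : S1.card ≤ w - a - 1 := by
      rcases S1.eq_empty_or_nonempty with h0 | ⟨d0, hd0⟩
      · simp [h0]
      have haw : a + 2 ≤ w := by
        have hm := mem_chords.1 (hsub (Finset.mem_filter.1 hd0).1)
        have := (Finset.mem_filter.1 hd0).2
        omega
      have hsub1 : S1.erase (a, w) ⊆ chords a w := by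
        intro d hd
        rw [Finset.mem_erase] at hd
        have hm := mem_chords.1 (hsub (Finset.mem_filter.1 hd.2).1)
        have hw := (Finset.mem_filter.1 hd.2).2
        rw [mem_chords]
        refine ⟨hm.1, hm.2.1, hw, ?_⟩
        rintro ⟨e1, e2⟩
        exact hd.1 (Prod.ext e1 e2)
      have := ih a w _ (by omega) hsub1 (NC_mono ((Finset.erase_subset _ _).trans (Finset.filter_subset _ _)) hnc)
      have h2 : S1.card ≤ (S1.erase (a, w)).card + 1 := by
        rcases Finset.decidableMem (a, w) S1 with h | h
        · rw [Finset.erase_eq_of_notMem h]; omega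
        · rw [Finset.card_erase_of_mem h]; omega
      omega
    have hb2 : S2.card ≤ b - w - 1 := by
      rcases S2.eq_empty_or_nonempty with h0 | ⟨d0, hd0⟩
      · simp [h0]
      have hwb : w + 2 ≤ b := by
        have hm := mem_chords.1 (hsub (Finset.mem_filter.1 hd0).1)
        have h1 := (Finset.mem_filter.1 hd0).2
        have := hsplit d0 (Finset.mem_filter.1 hd0).1
        omega
      have hsub2 : S2.erase (w, b) ⊆ chords w b := by
        intro d hd
        rw [Finset.mem_erase] at hd
        have hmem := (Finset.mem_filter.1 hd.2).1
        have hm := mem_chords.1 (hsub hmem)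
        have hw := (Finset.mem_filter.1 hd.2).2
        have hsp := hsplit d hmem
        rw [mem_chords]
        refine ⟨by omega, hm.2.1, hm.2.2.1, ?_⟩
        rintro ⟨e1, e2⟩
        exact hd.1 (Prod.ext e1 e2)
      have := ih w b _ (by omega) hsub2 (NC_mono ((Finset.erase_subset _ _).trans (Finset.filter_subset _ _)) hnc)
      have h2 : S2.card ≤ (S2.erase (w, b)).card + 1 := by
        rcases Finset.decidableMem (w, b) S2 with h | h
        · rw [Finset.erase_eq_of_notMem h]; omega
        · rw [Finset.card_erase_of_mem h]; omega
      omega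
    omega

/-- triangulations of the polygon `[a,b]` -/
noncomputable def tris (a b : ℕ) : Finset (Finset (ℕ × ℕ)) :=
  (chords a b).powerset.filter (fun T => T.card = b - a - 2 ∧ NC T)

lemma mem_tris {a b : ℕ} {T : Finset (ℕ × ℕ)} :
    T ∈ tris a b ↔ T ⊆ chords a b ∧ T.card = b - a - 2 ∧ NC T := by
  simp only [tris, Finset.mem_filter, Finset.mem_powerset, and_assoc]

lemma chords_small {a b : ℕ} (h : b ≤ a + 2) : chords a b = ∅ := by
  rw [Finset.eq_empty_iff_forall_notMem]
  intro d hd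
  rw [mem_chords] at hd
  omega

lemma tris_small {a b : ℕ} (h : b ≤ a + 2) : tris a b = {∅} := by
  ext T
  rw [mem_tris, Finset.mem_singleton]
  constructor
  · rintro ⟨h1, -, -⟩
    rw [chords_small h] at h1
    exact Finset.subset_empty.1 h1
  · rintro rfl
    refine ⟨Finset.empty_subset _, by rw [Finset.card_empty]; omega, by intro d hd; simp at hd⟩

/-- apex of the triangle on the long edge -/
lemma apex {a b : ℕ} {T : Finset (ℕ × ℕ)} (hT : T ∈ tris a b) (hab : a + 2 ≤ b) :
    ∃ v, a < v ∧ v < b ∧ (a + 2 ≤ v → (a, v) ∈ T) ∧ (v + 2 ≤ b → (v, b) ∈ T) ∧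
      ∀ d ∈ T, d.2 ≤ v ∨ v ≤ d.1 := by
  obtain ⟨hsub, hcard, hnc⟩ := mem_tris.1 hT
  set N : Finset ℕ := insert (a + 1) ((T.filter (fun d => d.1 = a)).image Prod.snd) with hN
  have hNne : N.Nonempty := ⟨a + 1, Finset.mem_insert_self _ _⟩
  set v := N.max' hNne with hv
  have hvN : v ∈ N := N.max'_mem hNne
  have hNmem : ∀ w ∈ N, w = a + 1 ∨ (a, w) ∈ T := by
    intro w hw
    rcases Finset.mem_insert.1 hw with h | h
    · exact Or.inl h
    · right
      obtain ⟨d, hd, hdw⟩ := Finset.mem_image.1 h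
      have := (Finset.mem_filter.1 hd).2
      obtain ⟨d1, d2⟩ := d
      simp only at this hdw
      subst this; subst hdw
      exact (Finset.mem_filter.1 hd).1
  have hNlt : ∀ w ∈ N, a < w ∧ w < b := by
    intro w hw
    rcases hNmem w hw with h | h
    · omega
    · have := mem_chords.1 (hsub h)
      omega
  have hva : a < v := (hNlt v hvN).1
  have hvb : v < b := (hNlt v hvN).2
  have hav : a + 2 ≤ v → (a, v) ∈ T := by
    intro h
    rcases hNmem v hvN with h' | h'
    · omega
    · exact h'
  have hsplit : ∀ d ∈ T, d.2 ≤ v ∨ v ≤ d.1 := by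
    intro d hd
    by_cases hda : d.1 = a
    · left
      refine N.le_max' d.2 (Finset.mem_insert.2 (Or.inr ?_))
      exact Finset.mem_image.2 ⟨d, Finset.mem_filter.2 ⟨hd, hda⟩, rfl⟩
    · rcases le_or_gt v d.1 with h | h
      · right; exact h
      · left
        have hdm := mem_chords.1 (hsub hd)
        have hv2 : a + 2 ≤ v := by omega
        have hav' := hav hv2
        have hne : d ≠ (a, v) := by
          intro h'; subst h'; simp at hda
        have := hnc (a, v) hav' d hd (fun h' => hne h'.symm)
        unfold Crossing at this
        simp only at this
        omega
  refine ⟨v, hva, hvb, hav, ?_, hsplit⟩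
  intro hv2
  by_contra hvbT
  -- insert (v, b) and contradict the bound
  have hins : insert (v, b) T ⊆ chords a b := by
    intro d hd
    rcases Finset.mem_insert.1 hd with rfl | hd
    · rw [mem_chords]
      simp only
      omega
    · exact hsub hd
  have hncins : NC (insert (v, b) T) := by
    intro d hd e he hne
    rcases Finset.mem_insert.1 hd with rfl | hd <;> rcases Finset.mem_insert.1 he with rfl | he
    · exact absurd rfl hne
    · have hem := mem_chords.1 (hsub he)
      have := hsplit e he
      unfold Crossing
      simp only
      omega
    · have hdm := mem_chords.1 (hsub hd)
      have := hsplit d hd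
      unfold Crossing
      simp only
      omega
    · exact hnc d hd e he hne
  have hbnd := nc_bound (b - a) a b _ (le_refl _) hins hncins
  rw [Finset.card_insert_of_notMem hvbT, hcard] at hbnd
  omega

noncomputable def glue (a v b : ℕ) (T1 T2 : Finset (ℕ × ℕ)) : Finset (ℕ × ℕ) :=
  T1 ∪ T2 ∪ (if a + 2 ≤ v then {(a, v)} else ∅) ∪ (if v + 2 ≤ b then {(v, b)} else ∅)

lemma mem_glue {a v b : ℕ} {T1 T2 : Finset (ℕ × ℕ)} {d : ℕ × ℕ} :
    d ∈ glue a v b T1 T2 ↔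
      d ∈ T1 ∨ d ∈ T2 ∨ (a + 2 ≤ v ∧ d = (a, v)) ∨ (v + 2 ≤ b ∧ d = (v, b)) := by
  simp only [glue, Finset.mem_union]
  split_ifs <;> simp <;> tauto

section GlueProps

variable {a v b : ℕ} {T1 T2 : Finset (ℕ × ℕ)}
  (hav : a < v) (hvb : v < b) (hT1 : T1 ∈ tris a v) (hT2 : T2 ∈ tris v b)

include hav hvb hT1 hT2

lemma glue_sub : glue a v b T1 T2 ⊆ chords a b := by
  intro d hd
  rcases mem_glue.1 hd with h | h | ⟨h, rfl⟩ | ⟨h, rfl⟩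
  · have := mem_chords.1 ((mem_tris.1 hT1).1 h)
    rw [mem_chords]; omega
  · have := mem_chords.1 ((mem_tris.1 hT2).1 h)
    rw [mem_chords]; omega
  · rw [mem_chords]; simp only; omega
  · rw [mem_chords]; simp only; omega

lemma glue_nc : NC (glue a v b T1 T2) := by
  have hsub1 := (mem_tris.1 hT1).1
  have hsub2 := (mem_tris.1 hT2).1
  have hnc1 := (mem_tris.1 hT1).2.2
  have hnc2 := (mem_tris.1 hT2).2.2
  intro d hd e he hne
  rcases mem_glue.1 hd with hd1 | hd2 | ⟨hc1, rfl⟩ | ⟨hc1, rfl⟩ <;>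
    rcases mem_glue.1 he with he1 | he2 | ⟨hc2, rfl⟩ | ⟨hc2, rfl⟩
  all_goals first
  | exact absurd rfl hne
  | exact hnc1 _ hd1 _ he1 hne
  | exact hnc2 _ hd2 _ he2 hne
  | · try have f1 := mem_chords.1 (hsub1 hd1)
      try have f1 := mem_chords.1 (hsub2 hd2)
      try have f2 := mem_chords.1 (hsub1 he1)
      try have f2 := mem_chords.1 (hsub2 he2)
      unfold Crossing
      omega

lemma glue_card :
    (glue a v b T1 T2).card =
      T1.card + T2.card + (if a + 2 ≤ v then 1 else 0) + (if v + 2 ≤ b then 1 else 0) := by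
  have hsub1 := (mem_tris.1 hT1).1
  have hsub2 := (mem_tris.1 hT2).1
  have h12 : Disjoint T1 T2 := by
    rw [Finset.disjoint_left]
    intro d hd1 hd2
    have f1 := mem_chords.1 (hsub1 hd1)
    have f2 := mem_chords.1 (hsub2 hd2)
    omega
  have hE1 : Disjoint (T1 ∪ T2) (if a + 2 ≤ v then ({(a, v)} : Finset (ℕ × ℕ)) else ∅) := by
    rw [Finset.disjoint_left]
    intro d hd hd2
    split_ifs at hd2 with h
    · rw [Finset.mem_singleton] at hd2
      subst hd2
      rcases Finset.mem_union.1 hd with h1 | h1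
      · exact (mem_chords.1 (hsub1 h1)).2.2.2 ⟨rfl, rfl⟩
      · have : v ≤ a := (mem_chords.1 (hsub2 h1)).1; omega
    · simp at hd2
  have hE2 : Disjoint (T1 ∪ T2 ∪ (if a + 2 ≤ v then ({(a, v)} : Finset (ℕ × ℕ)) else ∅))
      (if v + 2 ≤ b then ({(v, b)} : Finset (ℕ × ℕ)) else ∅) := by
    rw [Finset.disjoint_left]
    intro d hd hd2
    split_ifs at hd2 with h
    · rw [Finset.mem_singleton] at hd2
      subst hd2
      rcases Finset.mem_union.1 hd with h1 | h1
      rcases Finset.mem_union.1 h1 with h2 | h2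
      · have : b ≤ v := (mem_chords.1 (hsub1 h2)).2.2.1; omega
      · exact (mem_chords.1 (hsub2 h2)).2.2.2 ⟨rfl, rfl⟩
      · split_ifs at h1 with h'
        · rw [Finset.mem_singleton] at h1
          have hva : v = a := congrArg Prod.fst h1
          omega
        · simp at h1
    · simp at hd2
  rw [glue, Finset.card_union_of_disjoint hE2, Finset.card_union_of_disjoint hE1,
    Finset.card_union_of_disjoint h12]
  congr 1
  · congr 1
    split_ifs <;> simp
  · split_ifs <;> simp

lemma glue_mem_tris : glue a v b T1 T2 ∈ tris a b := by
  rw [mem_tris]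
  refine ⟨glue_sub hav hvb hT1 hT2, ?_, glue_nc hav hvb hT1 hT2⟩
  rw [glue_card hav hvb hT1 hT2, (mem_tris.1 hT1).2.1, (mem_tris.1 hT2).2.1]
  split_ifs <;> omega

lemma glue_filter1 :
    (glue a v b T1 T2).filter (fun d => d.2 ≤ v ∧ ¬(d.1 = a ∧ d.2 = v)) = T1 := by
  have hsub1 := (mem_tris.1 hT1).1
  have hsub2 := (mem_tris.1 hT2).1
  ext d
  rw [Finset.mem_filter, mem_glue]
  constructor
  · rintro ⟨h | h | ⟨h, rfl⟩ | ⟨h, rfl⟩, hf⟩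
    · exact h
    · have := mem_chords.1 (hsub2 h); omega
    · exact absurd ⟨rfl, rfl⟩ hf.2
    · have : b ≤ v := hf.1; omega
  · intro h
    have := mem_chords.1 (hsub1 h)
    exact ⟨Or.inl h, by omega⟩

lemma glue_filter2 :
    (glue a v b T1 T2).filter (fun d => v ≤ d.1 ∧ ¬(d.1 = v ∧ d.2 = b)) = T2 := by
  have hsub1 := (mem_tris.1 hT1).1
  have hsub2 := (mem_tris.1 hT2).1
  ext d
  rw [Finset.mem_filter, mem_glue]
  constructor
  · rintro ⟨h | h | ⟨h, rfl⟩ | ⟨h, rfl⟩, hf⟩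
    · have := mem_chords.1 (hsub1 h); omega
    · exact h
    · have : v ≤ a := hf.1; omega
    · exact absurd ⟨rfl, rfl⟩ hf.2
  · intro h
    have := mem_chords.1 (hsub2 h)
    exact ⟨Or.inr (Or.inl h), by omega⟩

lemma glue_split : ∀ d ∈ glue a v b T1 T2, d.2 ≤ v ∨ v ≤ d.1 := by
  intro d hd
  rcases mem_glue.1 hd with h | h | ⟨h, rfl⟩ | ⟨h, rfl⟩
  · have := mem_chords.1 ((mem_tris.1 hT1).1 h); omega
  · have := mem_chords.1 ((mem_tris.1 hT2).1 h); omega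
  · omega
  · omega

end GlueProps

lemma tri_decomp {a b : ℕ} {T : Finset (ℕ × ℕ)} (hT : T ∈ tris a b) (hab : a + 2 ≤ b) :
    ∃ v, a < v ∧ v < b ∧
      T.filter (fun d => d.2 ≤ v ∧ ¬(d.1 = a ∧ d.2 = v)) ∈ tris a v ∧
      T.filter (fun d => v ≤ d.1 ∧ ¬(d.1 = v ∧ d.2 = b)) ∈ tris v b ∧
      T = glue a v b (T.filter (fun d => d.2 ≤ v ∧ ¬(d.1 = a ∧ d.2 = v)))
        (T.filter (fun d => v ≤ d.1 ∧ ¬(d.1 = v ∧ d.2 = b))) := by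
  obtain ⟨hsub, hcard, hnc⟩ := mem_tris.1 hT
  obtain ⟨v, hva, hvb, hav, hvbT, hsplit⟩ := apex hT hab
  set T1 := T.filter (fun d => d.2 ≤ v ∧ ¬(d.1 = a ∧ d.2 = v)) with hT1def
  set T2 := T.filter (fun d => v ≤ d.1 ∧ ¬(d.1 = v ∧ d.2 = b)) with hT2def
  have hsub1 : T1 ⊆ chords a v := by
    intro d hd
    obtain ⟨hdT, hf⟩ := Finset.mem_filter.1 hd
    have := mem_chords.1 (hsub hdT)
    rw [mem_chords]
    omega
  have hsub2 : T2 ⊆ chords v b := by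
    intro d hd
    obtain ⟨hdT, hf⟩ := Finset.mem_filter.1 hd
    have := mem_chords.1 (hsub hdT)
    rw [mem_chords]
    omega
  -- T is the union of T1, T2 and the two edges
  have hunion : T = glue a v b T1 T2 := by
    ext d
    rw [mem_glue]
    constructor
    · intro hd
      have hc := mem_chords.1 (hsub hd)
      rcases hsplit d hd with h | h
      · by_cases he : d.1 = a ∧ d.2 = v
        · right; right; left
          refine ⟨by omega, Prod.ext he.1 he.2⟩
        · exact Or.inl (Finset.mem_filter.2 ⟨hd, h, he⟩)
      · by_cases he : d.1 = v ∧ d.2 = b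
        · right; right; right
          refine ⟨by omega, Prod.ext he.1 he.2⟩
        · exact Or.inr (Or.inl (Finset.mem_filter.2 ⟨hd, h, he⟩))
    · rintro (h | h | ⟨h, rfl⟩ | ⟨h, rfl⟩)
      · exact (Finset.filter_subset _ _) h
      · exact (Finset.filter_subset _ _) h
      · exact hav h
      · exact hvbT h
  -- cardinalities
  have hb1 : T1.card ≤ v - a - 2 := nc_bound (v - a) a v T1 le_rfl hsub1
    (NC_mono (Finset.filter_subset _ _) hnc)
  have hb2 : T2.card ≤ b - v - 2 := nc_bound (b - v) v b T2 le_rfl hsub2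
    (NC_mono (Finset.filter_subset _ _) hnc)
  have hcards : T.card = T1.card + T2.card + (if a + 2 ≤ v then 1 else 0) +
      (if v + 2 ≤ b then 1 else 0) := by
    -- mimic glue_card but we don't yet know T1 ∈ tris; reprove disjointness directly
    rw [hunion, glue]
    have h12 : Disjoint T1 T2 := by
      rw [Finset.disjoint_left]
      intro d hd1 hd2
      have f1 := mem_chords.1 (hsub1 hd1)
      have f2 := mem_chords.1 (hsub2 hd2)
      omega
    have hE1 : Disjoint (T1 ∪ T2) (if a + 2 ≤ v then ({(a, v)} : Finset (ℕ × ℕ)) else ∅) := by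
      rw [Finset.disjoint_left]
      intro d hd hd2
      split_ifs at hd2 with h
      · rw [Finset.mem_singleton] at hd2
        subst hd2
        rcases Finset.mem_union.1 hd with h1 | h1
        · exact (mem_chords.1 (hsub1 h1)).2.2.2 ⟨rfl, rfl⟩
        · have : v ≤ a := (mem_chords.1 (hsub2 h1)).1; omega
      · simp at hd2
    have hE2 : Disjoint (T1 ∪ T2 ∪ (if a + 2 ≤ v then ({(a, v)} : Finset (ℕ × ℕ)) else ∅))
        (if v + 2 ≤ b then ({(v, b)} : Finset (ℕ × ℕ)) else ∅) := by
      rw [Finset.disjoint_left]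
      intro d hd hd2
      split_ifs at hd2 with h
      · rw [Finset.mem_singleton] at hd2
        subst hd2
        rcases Finset.mem_union.1 hd with h1 | h1
        rcases Finset.mem_union.1 h1 with h2 | h2
        · have : b ≤ v := (mem_chords.1 (hsub1 h2)).2.2.1; omega
        · exact (mem_chords.1 (hsub2 h2)).2.2.2 ⟨rfl, rfl⟩
        · split_ifs at h1 with h'
          · rw [Finset.mem_singleton] at h1
            have hva' : v = a := congrArg Prod.fst h1
            omega
          · simp at h1
      · simp at hd2
    rw [Finset.card_union_of_disjoint hE2, Finset.card_union_of_disjoint hE1,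
      Finset.card_union_of_disjoint h12]
    congr 1
    · congr 1
      split_ifs <;> simp
    · split_ifs <;> simp
  have hc1 : T1.card = v - a - 2 := by
    rw [hcard] at hcards
    split_ifs at hcards <;> omega
  have hc2 : T2.card = b - v - 2 := by
    rw [hcard] at hcards
    split_ifs at hcards <;> omega
  exact ⟨v, hva, hvb,
    mem_tris.2 ⟨hsub1, hc1, NC_mono (Finset.filter_subset _ _) hnc⟩,
    mem_tris.2 ⟨hsub2, hc2, NC_mono (Finset.filter_subset _ _) hnc⟩, hunion⟩

/-- the apex is determined by the glued set -/
lemma glue_apex_unique {a b v v' : ℕ} {T1 T2 T1' T2' : Finset (ℕ × ℕ)}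
    (hav : a < v) (hvb : v < b) (hT1 : T1 ∈ tris a v) (hT2 : T2 ∈ tris v b)
    (hav' : a < v') (hvb' : v' < b) (hT1' : T1' ∈ tris a v') (hT2' : T2' ∈ tris v' b)
    (heq : glue a v b T1 T2 = glue a v' b T1' T2') : v = v' := by
  by_contra hne
  rcases Nat.lt_or_ge v v' with h | h
  · -- (a, v') ∈ glue a v' b, but it violates the v-split
    have hmem : (a, v') ∈ glue a v b T1 T2 := by
      rw [heq, mem_glue]
      right; right; left
      exact ⟨by omega, rfl⟩
    have := glue_split hav hvb hT1 hT2 _ hmem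
    simp only at this
    omega
  · have hmem : (a, v) ∈ glue a v' b T1' T2' := by
      rw [← heq, mem_glue]
      right; right; left
      exact ⟨by omega, rfl⟩
    have := glue_split hav' hvb' hT1' hT2' _ hmem
    simp only at this
    omega

lemma tris_card_rec {a b : ℕ} (hab : a + 2 ≤ b) :
    (tris a b).card = ∑ v ∈ Finset.Ioo a b, (tris a v).card * (tris v b).card := by
  have key : ((Finset.Ioo a b).sigma (fun v => tris a v ×ˢ tris v b)).card = (tris a b).card := by
    apply Finset.card_bij (fun p _ => glue a p.1 b p.2.1 p.2.2)
    · rintro ⟨v, T1, T2⟩ hp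
      rw [Finset.mem_sigma, Finset.mem_Ioo, Finset.mem_product] at hp
      exact glue_mem_tris hp.1.1 hp.1.2 hp.2.1 hp.2.2
    · rintro ⟨v, T1, T2⟩ hp ⟨v', T1', T2'⟩ hp' heq
      rw [Finset.mem_sigma, Finset.mem_Ioo, Finset.mem_product] at hp hp'
      dsimp only at hp hp' heq
      obtain rfl : v = v' :=
        glue_apex_unique hp.1.1 hp.1.2 hp.2.1 hp.2.2 hp'.1.1 hp'.1.2 hp'.2.1 hp'.2.2 heq
      have h1 : T1 = T1' := by
        rw [← glue_filter1 hp.1.1 hp.1.2 hp.2.1 hp.2.2,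
          ← glue_filter1 hp'.1.1 hp'.1.2 hp'.2.1 hp'.2.2, heq]
      have h2 : T2 = T2' := by
        rw [← glue_filter2 hp.1.1 hp.1.2 hp.2.1 hp.2.2,
          ← glue_filter2 hp'.1.1 hp'.1.2 hp'.2.1 hp'.2.2, heq]
      subst h1; subst h2; rfl
    · intro T hT
      obtain ⟨v, hva, hvb, h1, h2, hu⟩ := tri_decomp hT hab
      refine ⟨⟨v, _, _⟩, ?_, hu.symm⟩
      rw [Finset.mem_sigma, Finset.mem_Ioo, Finset.mem_product]
      exact ⟨⟨hva, hvb⟩, h1, h2⟩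
  rw [← key, Finset.card_sigma]
  congr 1
  ext v
  rw [Finset.card_product]

lemma tris_card_catalan : ∀ k a b, b - a ≤ k → a < b → (tris a b).card = catalan (b - a - 1) := by
  intro k
  induction k with
  | zero => intro a b h1 h2; omega
  | succ k ih =>
    intro a b h1 h2
    rcases Nat.lt_or_ge b (a + 3) with h | h
    · rw [tris_small (by omega)]
      have : b - a - 1 = 0 ∨ b - a - 1 = 1 := by omega
      rcases this with h' | h' <;> rw [h'] <;> simp [catalan_one]
    · rw [tris_card_rec (by omega)]
      have hsum : ∀ v ∈ Finset.Ioo a b,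
          (tris a v).card * (tris v b).card = catalan (v - a - 1) * catalan (b - v - 1) := by
        intro v hv
        rw [Finset.mem_Ioo] at hv
        rw [ih a v (by omega) hv.1, ih v b (by omega) hv.2]
      rw [Finset.sum_congr rfl hsum]
      -- reindex and apply the catalan recurrence
      have hre : ∑ v ∈ Finset.Ioo a b, catalan (v - a - 1) * catalan (b - v - 1) =
          ∑ i ∈ Finset.range (b - a - 1), catalan i * catalan (b - a - 2 - i) := by
        apply Finset.sum_nbij' (fun v => v - a - 1) (fun i => a + 1 + i)
        · intro v hv; rw [Finset.mem_Ioo] at hv; rw [Finset.mem_range]; omega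
        · intro i hi; rw [Finset.mem_range] at hi; rw [Finset.mem_Ioo]; omega
        · intro v hv; rw [Finset.mem_Ioo] at hv; omega
        · intro i hi; rw [Finset.mem_range] at hi; omega
        · intro v hv; rw [Finset.mem_Ioo] at hv
          congr 2 <;> omega
      rw [hre]
      have : b - a - 1 = (b - a - 2) + 1 := by omega
      rw [this, catalan_succ]
      rw [Finset.sum_range fun i => catalan i * catalan (b - a - 2 - i)]

/-- relabeling for the region through vertex `0`: chord `(x, n)` becomes `(0, x)` -/
def rl (n : ℕ) (d : ℕ × ℕ) : ℕ × ℕ := if d.2 = n then (0, d.1) else d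

/-- inverse relabeling -/
def rl' (n : ℕ) (d : ℕ × ℕ) : ℕ × ℕ := if d.1 = 0 then (d.2, n) else d

lemma rl_fact {n b : ℕ} {e : ℕ × ℕ} (hb2 : 2 ≤ b) (he : e ∈ chords b n) :
    (b ≤ (rl n e).1 ∧ (rl n e).1 + 2 ≤ (rl n e).2 ∧ (rl n e).2 ≤ n - 1) ∨
    ((rl n e).1 = 0 ∧ b < (rl n e).2 ∧ (rl n e).2 + 2 ≤ n) := by
  have h := mem_chords.1 he
  unfold rl
  split_ifs with h1 <;> omega

lemma rl_cross {n b : ℕ} {e f : ℕ × ℕ} (hb2 : 2 ≤ b) (he : e ∈ chords b n)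
    (hf : f ∈ chords b n) (hc : Crossing (rl n e) (rl n f)) : Crossing e f := by
  have h1 := mem_chords.1 he
  have h2 := mem_chords.1 hf
  unfold rl at hc
  unfold Crossing at hc ⊢
  split_ifs at hc <;> omega

lemma rl'_cross {n b : ℕ} {e f : ℕ × ℕ} (hb2 : 2 ≤ b)
    (he : b ≤ e.1 ∨ (e.1 = 0 ∧ b < e.2 ∧ e.2 + 2 ≤ n)) (he2 : e.1 + 2 ≤ e.2) (he3 : e.2 ≤ n - 1)
    (hf : b ≤ f.1 ∨ (f.1 = 0 ∧ b < f.2 ∧ f.2 + 2 ≤ n)) (hf2 : f.1 + 2 ≤ f.2) (hf3 : f.2 ≤ n - 1)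
    (hc : Crossing (rl' n e) (rl' n f)) : Crossing e f := by
  unfold rl' at hc
  unfold Crossing at hc ⊢
  split_ifs at hc <;> omega

lemma rl_inj {n b : ℕ} {e f : ℕ × ℕ} (hb2 : 2 ≤ b) (he : e ∈ chords b n)
    (hf : f ∈ chords b n) (h : rl n e = rl n f) : e = f := by
  have h1 := mem_chords.1 he
  have h2 := mem_chords.1 hf
  unfold rl at h
  rw [Prod.ext_iff] at h ⊢
  split_ifs at h <;> [skip; skip; skip; skip] <;> omega

lemma rl_rl' {n : ℕ} {d : ℕ × ℕ} (h : d.1 = 0 ∨ d.2 ≤ n - 1) (hn : 1 ≤ n) :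
    rl n (rl' n d) = d := by
  unfold rl rl'
  rcases h with h | h
  · rw [if_pos h, if_pos rfl, Prod.ext_iff]
    exact ⟨h.symm, rfl⟩
  · by_cases h1 : d.1 = 0
    · rw [if_pos h1, if_pos rfl, Prod.ext_iff]
      exact ⟨h1.symm, rfl⟩
    · rw [if_neg h1, if_neg (by omega)]

noncomputable def glue2 (n a b : ℕ) (T1 T2 T3 : Finset (ℕ × ℕ)) : Finset (ℕ × ℕ) :=
  T1 ∪ T2 ∪ T3.image (rl n) ∪ {(a, b)} ∪ (if 2 ≤ a then {(0, a)} else ∅) ∪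
    (if b ≤ n - 2 then {(0, b)} else ∅)

lemma mem_ite_singleton {c : Prop} [Decidable c] {x d : ℕ × ℕ} :
    d ∈ (if c then ({x} : Finset (ℕ × ℕ)) else ∅) ↔ c ∧ d = x := by
  split_ifs with h <;> simp [h]

lemma mem_glue2 {n a b : ℕ} {T1 T2 T3 : Finset (ℕ × ℕ)} {d : ℕ × ℕ} :
    d ∈ glue2 n a b T1 T2 T3 ↔
      d ∈ T1 ∨ d ∈ T2 ∨ (∃ e ∈ T3, rl n e = d) ∨ d = (a, b) ∨
        (2 ≤ a ∧ d = (0, a)) ∨ (b ≤ n - 2 ∧ d = (0, b)) := by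
  simp only [glue2, Finset.mem_union, Finset.mem_image, Finset.mem_singleton,
    mem_ite_singleton, or_assoc]

section Glue2

variable {n a b : ℕ} {T1 T2 T3 : Finset (ℕ × ℕ)}
  (hn : 3 ≤ n) (ha : 1 ≤ a) (hb : b ≤ n - 1) (hsep : n ≤ 2 * (b - a))
  (hsub1 : T1 ⊆ chords 0 a) (hsub2 : T2 ⊆ chords a b) (hsub3 : T3 ⊆ chords b n)

include hn ha hb hsep hsub1 hsub2 hsub3

lemma glue2_sub : glue2 n a b T1 T2 T3 ⊆ chords 0 (n - 1) := by
  intro d hd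
  rw [mem_chords]
  rcases mem_glue2.1 hd with h | h | ⟨e, he, rfl⟩ | rfl | ⟨h2, rfl⟩ | ⟨h2, rfl⟩
  · have := mem_chords.1 (hsub1 h); omega
  · have := mem_chords.1 (hsub2 h); omega
  · have := rl_fact (by omega) (hsub3 he); omega
  · omega
  · omega
  · omega

lemma glue2_nc (hnc1 : NC T1) (hnc2 : NC T2) (hnc3 : NC T3) :
    NC (glue2 n a b T1 T2 T3) := by
  intro d hd e he hne
  rcases mem_glue2.1 hd with hd1 | hd2 | ⟨e1, hd3, rfl⟩ | rfl | ⟨hy1, rfl⟩ | ⟨hy1, rfl⟩ <;>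
    rcases mem_glue2.1 he with he1 | he2 | ⟨e2, he3, rfl⟩ | rfl | ⟨hy2, rfl⟩ | ⟨hy2, rfl⟩
  all_goals first
  | exact absurd rfl hne
  | exact hnc1 _ hd1 _ he1 hne
  | exact hnc2 _ hd2 _ he2 hne
  | exact fun hc => hnc3 _ hd3 _ he3 (fun h => hne (congrArg (rl n) h))
      (rl_cross (by omega) (hsub3 hd3) (hsub3 he3) hc)
  | · try have f1 := mem_chords.1 (hsub1 hd1)
      try have f1 := mem_chords.1 (hsub2 hd2)
      try have f1 := rl_fact (b := b) (by omega) (hsub3 hd3)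
      try have f2 := mem_chords.1 (hsub1 he1)
      try have f2 := mem_chords.1 (hsub2 he2)
      try have f2 := rl_fact (b := b) (by omega) (hsub3 he3)
      unfold Crossing
      omega

lemma glue2_card :
    (glue2 n a b T1 T2 T3).card = T1.card + T2.card + T3.card + 1 +
      (if 2 ≤ a then 1 else 0) + (if b ≤ n - 2 then 1 else 0) := by
  have hrl : ∀ d ∈ T3.image (rl n),
      (b ≤ d.1 ∧ d.1 + 2 ≤ d.2 ∧ d.2 ≤ n - 1) ∨ (d.1 = 0 ∧ b < d.2 ∧ d.2 + 2 ≤ n) := by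
    intro d hd
    obtain ⟨e, he, rfl⟩ := Finset.mem_image.1 hd
    exact rl_fact (by omega) (hsub3 he)
  have c3 : (T3.image (rl n)).card = T3.card := by
    apply Finset.card_image_of_injOn
    intro x hx y hy hxy
    exact rl_inj (b := b) (by omega) (hsub3 hx) (hsub3 hy) hxy
  have d12 : Disjoint T1 T2 := by
    rw [Finset.disjoint_left]; intro d h1 h2
    have := mem_chords.1 (hsub1 h1); have := mem_chords.1 (hsub2 h2); omega
  have d123 : Disjoint (T1 ∪ T2) (T3.image (rl n)) := by
    rw [Finset.disjoint_left]; intro d h1 h2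
    have := hrl d h2
    rcases Finset.mem_union.1 h1 with h | h
    · have := mem_chords.1 (hsub1 h); omega
    · have := mem_chords.1 (hsub2 h); omega
  have dab : Disjoint (T1 ∪ T2 ∪ T3.image (rl n)) ({(a, b)} : Finset (ℕ × ℕ)) := by
    rw [Finset.disjoint_left]; intro d h1 h2
    rw [Finset.mem_singleton] at h2; subst h2
    rcases Finset.mem_union.1 h1 with h | h
    rcases Finset.mem_union.1 h with h' | h'
    · have := mem_chords.1 (hsub1 h'); omega
    · exact (mem_chords.1 (hsub2 h')).2.2.2 ⟨rfl, rfl⟩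
    · have := hrl _ h; omega
  have d0a : Disjoint (T1 ∪ T2 ∪ T3.image (rl n) ∪ {(a, b)})
      (if 2 ≤ a then ({(0, a)} : Finset (ℕ × ℕ)) else ∅) := by
    rw [Finset.disjoint_left]; intro d h1 h2
    split_ifs at h2 with hcs
    · rw [Finset.mem_singleton] at h2; subst h2
      rcases Finset.mem_union.1 h1 with h | h
      rcases Finset.mem_union.1 h with h' | h'
      rcases Finset.mem_union.1 h' with h'' | h''
      · exact (mem_chords.1 (hsub1 h'')).2.2.2 ⟨rfl, rfl⟩
      · have := mem_chords.1 (hsub2 h''); omega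
      · have := hrl _ h'; omega
      · rw [Finset.mem_singleton, Prod.ext_iff] at h; omega
    · simp at h2
  have d0b : Disjoint (T1 ∪ T2 ∪ T3.image (rl n) ∪ {(a, b)} ∪
      (if 2 ≤ a then ({(0, a)} : Finset (ℕ × ℕ)) else ∅))
      (if b ≤ n - 2 then ({(0, b)} : Finset (ℕ × ℕ)) else ∅) := by
    rw [Finset.disjoint_left]; intro d h1 h2
    split_ifs at h2 with hcs
    · rw [Finset.mem_singleton] at h2; subst h2
      rcases Finset.mem_union.1 h1 with h | h
      rcases Finset.mem_union.1 h with h' | h'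
      rcases Finset.mem_union.1 h' with h'' | h''
      rcases Finset.mem_union.1 h'' with h3 | h3
      · have := mem_chords.1 (hsub1 h3); omega
      · have := mem_chords.1 (hsub2 h3); omega
      · have := hrl _ h''
        have hne : ∀ e ∈ T3, rl n e = (0, b) → False := by
          intro e he hrle
          have hme := mem_chords.1 (hsub3 he)
          unfold rl at hrle
          rw [Prod.ext_iff] at hrle
          split_ifs at hrle <;> omega
        obtain ⟨e, he, hrle⟩ := Finset.mem_image.1 h''
        exact hne e he hrle
      · rw [Finset.mem_singleton, Prod.ext_iff] at h'; omega
      · split_ifs at h with hcs2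
        · rw [Finset.mem_singleton, Prod.ext_iff] at h; omega
        · simp at h
    · simp at h2
  rw [glue2, Finset.card_union_of_disjoint d0b, Finset.card_union_of_disjoint d0a,
    Finset.card_union_of_disjoint dab, Finset.card_union_of_disjoint d123,
    Finset.card_union_of_disjoint d12, c3, Finset.card_singleton]
  congr 1
  · congr 1
    split_ifs <;> simp
  · split_ifs <;> simp

lemma glue2_f1 :
    (glue2 n a b T1 T2 T3).filter (fun d => d.2 ≤ a ∧ ¬(d.1 = 0 ∧ d.2 = a)) = T1 := by
  ext d
  rw [Finset.mem_filter, mem_glue2]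
  constructor
  · rintro ⟨h | h | ⟨e, he, rfl⟩ | rfl | ⟨h2, rfl⟩ | ⟨h2, rfl⟩, hf⟩
    · exact h
    · have := mem_chords.1 (hsub2 h); omega
    · have := rl_fact (b := b) (by omega) (hsub3 he); omega
    · omega
    · omega
    · omega
  · intro h
    have := mem_chords.1 (hsub1 h)
    exact ⟨Or.inl h, by omega⟩

lemma glue2_f2 :
    (glue2 n a b T1 T2 T3).filter (fun d => a ≤ d.1 ∧ d.2 ≤ b ∧ ¬(d.1 = a ∧ d.2 = b)) = T2 := by
  ext d
  rw [Finset.mem_filter, mem_glue2]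
  constructor
  · rintro ⟨h | h | ⟨e, he, rfl⟩ | rfl | ⟨h2, rfl⟩ | ⟨h2, rfl⟩, hf⟩
    · have := mem_chords.1 (hsub1 h); omega
    · exact h
    · have := rl_fact (b := b) (by omega) (hsub3 he); omega
    · omega
    · omega
    · omega
  · intro h
    have := mem_chords.1 (hsub2 h)
    exact ⟨Or.inr (Or.inl h), by omega⟩

lemma glue2_f3 :
    (glue2 n a b T1 T2 T3).filter (fun d => b ≤ d.1 ∨ (d.1 = 0 ∧ b < d.2)) = T3.image (rl n) := by
  ext d
  rw [Finset.mem_filter, mem_glue2]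
  constructor
  · rintro ⟨h | h | ⟨e, he, rfl⟩ | rfl | ⟨h2, rfl⟩ | ⟨h2, rfl⟩, hf⟩
    · have := mem_chords.1 (hsub1 h); omega
    · have := mem_chords.1 (hsub2 h); omega
    · exact Finset.mem_image_of_mem _ he
    · omega
    · omega
    · omega
  · intro h
    obtain ⟨e, he, rfl⟩ := Finset.mem_image.1 h
    have := rl_fact (b := b) (by omega) (hsub3 he)
    exact ⟨Or.inr (Or.inr (Or.inl ⟨e, he, rfl⟩)), by omega⟩

end Glue2

/-- the triangulations counted by the theorem -/
noncomputable def mainSet (n : ℕ) : Finset (Finset (ℕ × ℕ)) :=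
  (tris 0 (n - 1)).filter (fun T => ∃ d ∈ T, 1 ≤ d.1 ∧ n ≤ 2 * (d.2 - d.1))

/-- the index set of separating chords -/
noncomputable def idx (n : ℕ) : Finset (ℕ × ℕ) :=
  (Finset.range n ×ˢ Finset.range n).filter
    (fun p => 1 ≤ p.1 ∧ p.2 ≤ n - 1 ∧ n ≤ 2 * (p.2 - p.1))

lemma mem_idx {n : ℕ} {p : ℕ × ℕ} (hn : 3 ≤ n) :
    p ∈ idx n ↔ 1 ≤ p.1 ∧ p.2 ≤ n - 1 ∧ n ≤ 2 * (p.2 - p.1) := by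
  simp only [idx, Finset.mem_filter, Finset.mem_product, Finset.mem_range]
  constructor
  · rintro ⟨-, h⟩; exact h
  · rintro ⟨h1, h2, h3⟩; exact ⟨⟨by omega, by omega⟩, h1, h2, h3⟩

/-- the property identifying the outermost separating chord -/
def SepP (n : ℕ) (T : Finset (ℕ × ℕ)) (a b : ℕ) : Prop :=
  (a, b) ∈ T ∧ 1 ≤ a ∧ b ≤ n - 1 ∧ n ≤ 2 * (b - a) ∧
    (2 ≤ a → (0, a) ∈ T) ∧ (b ≤ n - 2 → (0, b) ∈ T)

lemma sep_outer {n a b a' b' : ℕ} {T : Finset (ℕ × ℕ)} (hn : 3 ≤ n)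
    (hT : T ∈ tris 0 (n - 1)) (h : SepP n T a b) (h' : SepP n T a' b')
    (h1 : a ≤ a') (h2 : b' ≤ b) (hne : ¬(a = a' ∧ b = b')) : False := by
  obtain ⟨hsub, hcard, hnc⟩ := mem_tris.1 hT
  obtain ⟨hs1, hs2, hs3, hs4, hs5, hs6⟩ := h
  obtain ⟨ht1, ht2, ht3, ht4, ht5, ht6⟩ := h'
  have hm := mem_chords.1 (hsub hs1)
  have hm' := mem_chords.1 (hsub ht1)
  rcases Nat.lt_or_ge a a' with hlt | hge
  · have h0a' : (0, a') ∈ T := ht5 (by omega)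
    have hne2 : (0, a') ≠ (a, b) := by
      intro hx
      have : (0 : ℕ) = a := congrArg Prod.fst hx
      omega
    have := hnc _ h0a' _ hs1 hne2
    unfold Crossing at this
    omega
  · have haa : a = a' := by omega
    have hbb : b' < b := by omega
    have h0b' : (0, b') ∈ T := ht6 (by omega)
    have hne2 : (0, b') ≠ (a, b) := by
      intro hx
      have : (0 : ℕ) = a := congrArg Prod.fst hx
      omega
    have := hnc _ h0b' _ hs1 hne2
    unfold Crossing at this
    omega

lemma sep_unique {n a b a' b' : ℕ} {T : Finset (ℕ × ℕ)} (hn : 3 ≤ n)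
    (hT : T ∈ tris 0 (n - 1)) (h : SepP n T a b) (h' : SepP n T a' b') :
    a = a' ∧ b = b' := by
  by_contra hne
  obtain ⟨hsub, hcard, hnc⟩ := mem_tris.1 hT
  have hm := mem_chords.1 (hsub h.1)
  have hm' := mem_chords.1 (hsub h'.1)
  have hpne : (a, b) ≠ (a', b') := by
    intro hx
    exact hne ⟨congrArg Prod.fst hx, congrArg Prod.snd hx⟩
  have hcr := hnc _ h.1 _ h'.1 hpne
  unfold Crossing at hcr
  have hnest : (a ≤ a' ∧ b' ≤ b) ∨ (a' ≤ a ∧ b ≤ b') := by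
    have x1 := h.2.2.2.1
    have x2 := h'.2.2.2.1
    have x3 := h.2.1
    have x4 := h'.2.1
    omega
  rcases hnest with ⟨x1, x2⟩ | ⟨x1, x2⟩
  · exact sep_outer hn hT h h' x1 x2 hne
  · exact sep_outer hn hT h' h x1 x2 (fun hx => hne ⟨hx.1.symm, hx.2.symm⟩)

lemma main_decomp {n : ℕ} {T : Finset (ℕ × ℕ)} (hn : 3 ≤ n) (hT : T ∈ mainSet n) :
    ∃ a b T1 T2 T3, 1 ≤ a ∧ b ≤ n - 1 ∧ n ≤ 2 * (b - a) ∧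
      T1 ∈ tris 0 a ∧ T2 ∈ tris a b ∧ T3 ∈ tris b n ∧ T = glue2 n a b T1 T2 T3 := by
  obtain ⟨hTt, hex⟩ := Finset.mem_filter.1 hT
  obtain ⟨hsub, hcard, hnc⟩ := mem_tris.1 hTt
  set S := T.filter (fun d => 1 ≤ d.1 ∧ n ≤ 2 * (d.2 - d.1)) with hSdef
  have hSne : S.Nonempty := by
    obtain ⟨d, hd, h1, h2⟩ := hex
    exact ⟨d, Finset.mem_filter.2 ⟨hd, h1, h2⟩⟩
  obtain ⟨⟨a, b⟩, hcS, hmax⟩ := Finset.exists_max_image S (fun d => d.2 - d.1) hSne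
  have habT : (a, b) ∈ T := (Finset.mem_filter.1 hcS).1
  have ha1 : 1 ≤ a := (Finset.mem_filter.1 hcS).2.1
  have hblen : n ≤ 2 * (b - a) := (Finset.mem_filter.1 hcS).2.2
  have hmab := mem_chords.1 (hsub habT)
  have hb : b ≤ n - 1 := by omega
  -- the two chords to vertex 0
  have hOA : 2 ≤ a → (0, a) ∈ T := by
    intro h2a
    by_contra hno
    have hkey : ∀ e ∈ T, ¬(0 < e.1 ∧ e.1 < a ∧ a < e.2) := by
      intro e he
      rintro ⟨k1, k2, k3⟩
      have hme := mem_chords.1 (hsub he)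
      have hene : e ≠ (a, b) := by
        intro h'
        have : e.1 = a := congrArg Prod.fst h'
        omega
      have hnc2 := hnc e he _ habT hene
      unfold Crossing at hnc2
      have heS : e ∈ S := Finset.mem_filter.2 ⟨he, by omega, by omega⟩
      have := hmax _ heS
      omega
    have hncins : NC (insert (0, a) T) := by
      intro d hd e he hne
      rcases Finset.mem_insert.1 hd with rfl | hd <;> rcases Finset.mem_insert.1 he with rfl | he
      · exact absurd rfl hne
      · intro hc
        have := hkey e he
        unfold Crossing at hc
        omega
      · intro hc
        have := hkey d hd
        unfold Crossing at hc
        omega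
      · exact hnc d hd e he hne
    have hins_sub : insert (0, a) T ⊆ chords 0 (n - 1) := by
      intro d hd
      rcases Finset.mem_insert.1 hd with rfl | hd
      · rw [mem_chords]; omega
      · exact hsub hd
    have := nc_bound (n - 1) 0 (n - 1) _ (by omega) hins_sub hncins
    rw [Finset.card_insert_of_notMem hno, hcard] at this
    omega
  have hOB : b ≤ n - 2 → (0, b) ∈ T := by
    intro h2b
    by_contra hno
    have hkey : ∀ e ∈ T, ¬(0 < e.1 ∧ e.1 < b ∧ b < e.2) := by
      intro e he
      rintro ⟨k1, k2, k3⟩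
      have hme := mem_chords.1 (hsub he)
      have hene : e ≠ (a, b) := by
        intro h'
        have : e.2 = b := congrArg Prod.snd h'
        omega
      have hnc2 := hnc e he _ habT hene
      unfold Crossing at hnc2
      have heS : e ∈ S := Finset.mem_filter.2 ⟨he, by omega, by omega⟩
      have := hmax _ heS
      omega
    have hncins : NC (insert (0, b) T) := by
      intro d hd e he hne
      rcases Finset.mem_insert.1 hd with rfl | hd <;> rcases Finset.mem_insert.1 he with rfl | he
      · exact absurd rfl hne
      · intro hc
        have := hkey e he
        unfold Crossing at hc
        omega
      · intro hc
        have := hkey d hd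
        unfold Crossing at hc
        omega
      · exact hnc d hd e he hne
    have hins_sub : insert (0, b) T ⊆ chords 0 (n - 1) := by
      intro d hd
      rcases Finset.mem_insert.1 hd with rfl | hd
      · rw [mem_chords]; omega
      · exact hsub hd
    have := nc_bound (n - 1) 0 (n - 1) _ (by omega) hins_sub hncins
    rw [Finset.card_insert_of_notMem hno, hcard] at this
    omega
  -- region split
  have hreg : ∀ d ∈ T, ¬(d.1 = a ∧ d.2 = b) → ¬(d.1 = 0 ∧ d.2 = a) → ¬(d.1 = 0 ∧ d.2 = b) →
      d.2 ≤ a ∨ (a ≤ d.1 ∧ d.2 ≤ b) ∨ b ≤ d.1 ∨ (d.1 = 0 ∧ b < d.2) := by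
    intro d hd hne1 hne2 hne3
    have hmd := mem_chords.1 (hsub hd)
    have hc1 := hnc d hd _ habT (by intro h'; rw [Prod.ext_iff] at h'; exact hne1 h')
    unfold Crossing at hc1
    by_cases h2a : 2 ≤ a
    · have hcA := hnc d hd _ (hOA h2a) (by intro h'; rw [Prod.ext_iff] at h'; exact hne2 h')
      unfold Crossing at hcA
      by_cases h2b : b ≤ n - 2
      · have hcB := hnc d hd _ (hOB h2b) (by intro h'; rw [Prod.ext_iff] at h'; exact hne3 h')
        unfold Crossing at hcB
        omega
      · omega
    · by_cases h2b : b ≤ n - 2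
      · have hcB := hnc d hd _ (hOB h2b) (by intro h'; rw [Prod.ext_iff] at h'; exact hne3 h')
        unfold Crossing at hcB
        omega
      · omega
  -- the three parts
  set T1 := T.filter (fun d => d.2 ≤ a ∧ ¬(d.1 = 0 ∧ d.2 = a)) with hT1def
  set T2 := T.filter (fun d => a ≤ d.1 ∧ d.2 ≤ b ∧ ¬(d.1 = a ∧ d.2 = b)) with hT2def
  set T3p := T.filter (fun d => b ≤ d.1 ∨ (d.1 = 0 ∧ b < d.2)) with hT3pdef
  set T3 := T3p.image (rl' n) with hT3def
  have hsub1 : T1 ⊆ chords 0 a := by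
    intro d hd
    obtain ⟨hdT, hf⟩ := Finset.mem_filter.1 hd
    have := mem_chords.1 (hsub hdT)
    rw [mem_chords]
    omega
  have hsub2 : T2 ⊆ chords a b := by
    intro d hd
    obtain ⟨hdT, hf⟩ := Finset.mem_filter.1 hd
    have := mem_chords.1 (hsub hdT)
    rw [mem_chords]
    omega
  have hfact3 : ∀ d ∈ T3p, b ≤ d.1 ∨ (d.1 = 0 ∧ b < d.2 ∧ d.2 + 2 ≤ n) := by
    intro d hd
    obtain ⟨hdT, hf⟩ := Finset.mem_filter.1 hd
    have := mem_chords.1 (hsub hdT)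
    omega
  have hsub3 : T3 ⊆ chords b n := by
    intro d hd
    obtain ⟨e, he, rfl⟩ := Finset.mem_image.1 hd
    have hfe := hfact3 e he
    have hme := mem_chords.1 (hsub (Finset.mem_filter.1 he).1)
    rw [mem_chords]
    unfold rl'
    split_ifs with h0 <;> omega
  have himg : T3.image (rl n) = T3p := by
    rw [hT3def, Finset.image_image]
    have : ∀ e ∈ T3p, (rl n ∘ rl' n) e = id e := by
      intro e he
      have hme := mem_chords.1 (hsub (Finset.mem_filter.1 he).1)
      exact rl_rl' (by omega) (by omega)
    rw [Finset.image_congr this, Finset.image_id]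
  have hc3 : T3.card = T3p.card := by
    rw [hT3def]
    apply Finset.card_image_of_injOn
    intro x hx y hy hxy
    have hx1 := hfact3 x hx
    have hy1 := hfact3 y hy
    have hx2 := mem_chords.1 (hsub (Finset.mem_filter.1 hx).1)
    have hy2 := mem_chords.1 (hsub (Finset.mem_filter.1 hy).1)
    unfold rl' at hxy
    rw [Prod.ext_iff] at hxy ⊢
    split_ifs at hxy <;> [skip; skip; skip; skip] <;> omega
  have hnc3 : NC T3 := by
    intro x hx y hy hne hc
    obtain ⟨e, he, rfl⟩ := Finset.mem_image.1 hx
    obtain ⟨f, hf, rfl⟩ := Finset.mem_image.1 hy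
    have hef : e ≠ f := fun h => hne (by rw [h])
    have he2 := mem_chords.1 (hsub (Finset.mem_filter.1 he).1)
    have hf2 := mem_chords.1 (hsub (Finset.mem_filter.1 hf).1)
    exact hnc e (Finset.mem_filter.1 he).1 f (Finset.mem_filter.1 hf).1 hef
      (rl'_cross (n := n) (by omega) (hfact3 e he) (by omega) (by omega)
        (hfact3 f hf) (by omega) (by omega) hc)
  -- T equals the glue
  have hglue : T = glue2 n a b T1 T2 T3 := by
    ext d
    rw [mem_glue2]
    constructor
    · intro hd
      have hmd := mem_chords.1 (hsub hd)
      by_cases h1 : d.1 = a ∧ d.2 = b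
      · right; right; right; left; exact Prod.ext h1.1 h1.2
      by_cases h2 : d.1 = 0 ∧ d.2 = a
      · right; right; right; right; left
        exact ⟨by omega, Prod.ext h2.1 h2.2⟩
      by_cases h3 : d.1 = 0 ∧ d.2 = b
      · right; right; right; right; right
        exact ⟨by omega, Prod.ext h3.1 h3.2⟩
      rcases hreg d hd h1 h2 h3 with hr | hr | hr | hr
      · exact Or.inl (Finset.mem_filter.2 ⟨hd, hr, h2⟩)
      · exact Or.inr (Or.inl (Finset.mem_filter.2 ⟨hd, hr.1, hr.2, h1⟩))
      · refine Or.inr (Or.inr (Or.inl ?_))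
        have : d ∈ T3p := Finset.mem_filter.2 ⟨hd, Or.inl hr⟩
        rw [← himg] at this
        obtain ⟨e, he, hrle⟩ := Finset.mem_image.1 this
        exact ⟨e, he, hrle⟩
      · refine Or.inr (Or.inr (Or.inl ?_))
        have : d ∈ T3p := Finset.mem_filter.2 ⟨hd, Or.inr hr⟩
        rw [← himg] at this
        obtain ⟨e, he, hrle⟩ := Finset.mem_image.1 this
        exact ⟨e, he, hrle⟩
    · rintro (h | h | ⟨e, he, rfl⟩ | rfl | ⟨h2, rfl⟩ | ⟨h2, rfl⟩)
      · exact (Finset.filter_subset _ _) h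
      · exact (Finset.filter_subset _ _) h
      · have : rl n e ∈ T3p := by
          rw [← himg]
          exact Finset.mem_image_of_mem _ he
        exact (Finset.filter_subset _ _) this
      · exact habT
      · exact hOA h2
      · exact hOB h2
  -- cardinalities
  have hcards := glue2_card hn ha1 hb hblen hsub1 hsub2 hsub3
  rw [← hglue, hcard] at hcards
  have hb1 : T1.card ≤ a - 0 - 2 := nc_bound a 0 a T1 (by omega) hsub1
    (NC_mono (Finset.filter_subset _ _) hnc)
  have hb2 : T2.card ≤ b - a - 2 := nc_bound (b - a) a b T2 le_rfl hsub2
    (NC_mono (Finset.filter_subset _ _) hnc)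
  have hb3 : T3.card ≤ n - b - 2 := nc_bound (n - b) b n T3 le_rfl hsub3 hnc3
  have hcc : T1.card = a - 0 - 2 ∧ T2.card = b - a - 2 ∧ T3.card = n - b - 2 := by
    split_ifs at hcards <;> omega
  exact ⟨a, b, T1, T2, T3, ha1, hb, hblen,
    mem_tris.2 ⟨hsub1, hcc.1, NC_mono (Finset.filter_subset _ _) hnc⟩,
    mem_tris.2 ⟨hsub2, hcc.2.1, NC_mono (Finset.filter_subset _ _) hnc⟩,
    mem_tris.2 ⟨hsub3, hcc.2.2, hnc3⟩, hglue⟩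

lemma glue2_mem_main {n a b : ℕ} {T1 T2 T3 : Finset (ℕ × ℕ)}
    (hn : 3 ≤ n) (ha : 1 ≤ a) (hb : b ≤ n - 1) (hsep : n ≤ 2 * (b - a))
    (hT1 : T1 ∈ tris 0 a) (hT2 : T2 ∈ tris a b) (hT3 : T3 ∈ tris b n) :
    glue2 n a b T1 T2 T3 ∈ mainSet n := by
  obtain ⟨hs1, hc1, hn1⟩ := mem_tris.1 hT1
  obtain ⟨hs2, hc2, hn2⟩ := mem_tris.1 hT2
  obtain ⟨hs3, hc3, hn3⟩ := mem_tris.1 hT3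
  refine Finset.mem_filter.2 ⟨mem_tris.2 ⟨glue2_sub hn ha hb hsep hs1 hs2 hs3, ?_,
    glue2_nc hn ha hb hsep hs1 hs2 hs3 hn1 hn2 hn3⟩, ?_⟩
  · rw [glue2_card hn ha hb hsep hs1 hs2 hs3, hc1, hc2, hc3]
    split_ifs <;> omega
  · refine ⟨(a, b), mem_glue2.2 (Or.inr (Or.inr (Or.inr (Or.inl rfl)))), by omega, by omega⟩

lemma glue2_sepP {n a b : ℕ} {T1 T2 T3 : Finset (ℕ × ℕ)}
    (hn : 3 ≤ n) (ha : 1 ≤ a) (hb : b ≤ n - 1) (hsep : n ≤ 2 * (b - a)) :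
    SepP n (glue2 n a b T1 T2 T3) a b := by
  refine ⟨mem_glue2.2 (Or.inr (Or.inr (Or.inr (Or.inl rfl)))), ha, hb, hsep, ?_, ?_⟩
  · intro h2
    exact mem_glue2.2 (Or.inr (Or.inr (Or.inr (Or.inr (Or.inl ⟨h2, rfl⟩)))))
  · intro h2
    exact mem_glue2.2 (Or.inr (Or.inr (Or.inr (Or.inr (Or.inr ⟨h2, rfl⟩)))))

lemma main_card {n : ℕ} (hn : 3 ≤ n) :
    (mainSet n).card =
      ∑ p ∈ idx n, catalan (p.1 - 1) * (catalan (p.2 - p.1 - 1) * catalan (n - p.2 - 1)) := by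
  have key : ((idx n).sigma (fun p => tris 0 p.1 ×ˢ (tris p.1 p.2 ×ˢ tris p.2 n))).card =
      (mainSet n).card := by
    apply Finset.card_bij (fun q _ => glue2 n q.1.1 q.1.2 q.2.1 q.2.2.1 q.2.2.2)
    · rintro ⟨⟨a, b⟩, T1, T2, T3⟩ hq
      have hq' := hq
      rw [Finset.mem_sigma, Finset.mem_product, Finset.mem_product] at hq'
      rw [mem_idx hn] at hq'
      dsimp only at hq' ⊢
      exact glue2_mem_main hn hq'.1.1 hq'.1.2.1 hq'.1.2.2 hq'.2.1 hq'.2.2.1 hq'.2.2.2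
    · rintro ⟨⟨a, b⟩, T1, T2, T3⟩ hq ⟨⟨a', b'⟩, T1', T2', T3'⟩ hq' heq
      rw [Finset.mem_sigma, Finset.mem_product, Finset.mem_product] at hq hq'
      rw [mem_idx hn] at hq hq'
      dsimp only at hq hq' heq
      obtain ⟨hqa, hqb, hqs⟩ := hq.1
      obtain ⟨hqa', hqb', hqs'⟩ := hq'.1
      obtain ⟨hT1, hT2, hT3⟩ := hq.2
      obtain ⟨hT1', hT2', hT3'⟩ := hq'.2
      have hmm := glue2_mem_main hn hqa hqb hqs hT1 hT2 hT3
      have hTt := (Finset.mem_filter.1 hmm).1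
      have hsep1 := glue2_sepP (T1 := T1) (T2 := T2) (T3 := T3) hn hqa hqb hqs
      have hsep2 := glue2_sepP (T1 := T1') (T2 := T2') (T3 := T3') hn hqa' hqb' hqs'
      rw [← heq] at hsep2
      obtain ⟨rfl, rfl⟩ := sep_unique hn hTt hsep1 hsep2
      obtain ⟨hs1, hc1, hn1⟩ := mem_tris.1 hT1
      obtain ⟨hs2, hc2, hn2⟩ := mem_tris.1 hT2
      obtain ⟨hs3, hc3, hn3⟩ := mem_tris.1 hT3
      obtain ⟨hs1', hc1', hn1'⟩ := mem_tris.1 hT1'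
      obtain ⟨hs2', hc2', hn2'⟩ := mem_tris.1 hT2'
      obtain ⟨hs3', hc3', hn3'⟩ := mem_tris.1 hT3'
      have e1 : T1 = T1' := by
        rw [← glue2_f1 hn hqa hqb hqs hs1 hs2 hs3,
          ← glue2_f1 hn hqa hqb hqs hs1' hs2' hs3', heq]
      have e2 : T2 = T2' := by
        rw [← glue2_f2 hn hqa hqb hqs hs1 hs2 hs3,
          ← glue2_f2 hn hqa hqb hqs hs1' hs2' hs3', heq]
      have e3im : T3.image (rl n) = T3'.image (rl n) := by
        rw [← glue2_f3 hn hqa hqb hqs hs1 hs2 hs3,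
          ← glue2_f3 hn hqa hqb hqs hs1' hs2' hs3', heq]
      have e3 : T3 = T3' := by
        ext e
        constructor
        · intro he
          have : rl n e ∈ T3'.image (rl n) := by
            rw [← e3im]; exact Finset.mem_image_of_mem _ he
          obtain ⟨f, hf, hfe⟩ := Finset.mem_image.1 this
          have := rl_inj (by omega) (hs3' hf) (hs3 he) hfe
          rwa [← this]
        · intro he
          have : rl n e ∈ T3.image (rl n) := by
            rw [e3im]; exact Finset.mem_image_of_mem _ he
          obtain ⟨f, hf, hfe⟩ := Finset.mem_image.1 this
          have := rl_inj (by omega) (hs3 hf) (hs3' he) hfe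
          rwa [← this]
      subst e1; subst e2; subst e3; rfl
    · intro T hT
      obtain ⟨a, b, T1, T2, T3, h1, h2, h3, h4, h5, h6, h7⟩ := main_decomp hn hT
      refine ⟨⟨(a, b), T1, T2, T3⟩, ?_, h7.symm⟩
      rw [Finset.mem_sigma, Finset.mem_product, Finset.mem_product, mem_idx hn]
      exact ⟨⟨h1, h2, h3⟩, h4, h5, h6⟩
  rw [← key, Finset.card_sigma]
  apply Finset.sum_congr rfl
  intro p hp
  rw [mem_idx hn] at hp
  rw [Finset.card_product, Finset.card_product,
    tris_card_catalan p.1 0 p.1 le_rfl (by omega),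
    tris_card_catalan (p.2 - p.1) p.1 p.2 le_rfl (by omega),
    tris_card_catalan (n - p.2) p.2 n le_rfl (by omega)]
  congr 1

lemma sum_inner_catalan {m : ℕ} (hm : 1 ≤ m) :
    ∑ a ∈ Finset.Icc 1 m, catalan (a - 1) * catalan (m - a) = catalan m := by
  conv_rhs => rw [show m = (m - 1) + 1 by omega, catalan_succ']
  apply Finset.sum_nbij' (fun a => (a - 1, m - a)) (fun ij => ij.1 + 1)
  · intro a ha
    rw [Finset.mem_Icc] at ha
    rw [Finset.HasAntidiagonal.mem_antidiagonal]
    omega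
  · intro ij hij
    rw [Finset.HasAntidiagonal.mem_antidiagonal] at hij
    rw [Finset.mem_Icc]
    omega
  · intro a ha
    rw [Finset.mem_Icc] at ha
    omega
  · intro ij hij
    rw [Finset.HasAntidiagonal.mem_antidiagonal] at hij
    rw [Prod.ext_iff]
    exact ⟨by omega, by omega⟩
  · intro a ha
    rfl


/-- The number of triangulations of a convex `n`-gon whose central component does not
contain the vertex `0` equals `∑_{m=1}^{⌊n/2⌋-1} C_m C_{n-2-m}`. -/
theorem card_central_avoids_zero (n : ℕ) (hn : 3 ≤ n) :
    Nat.card {T : Finset (ℕ × ℕ) // IsTriangulation n T ∧ CentralAvoidsZero n T} =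
      ∑ m ∈ Finset.Icc 1 (n / 2 - 1), catalan m * catalan (n - 2 - m) := by
  have hiff : ∀ T : Finset (ℕ × ℕ),
      (IsTriangulation n T ∧ CentralAvoidsZero n T) ↔ T ∈ mainSet n := by
    intro T
    unfold IsTriangulation CentralAvoidsZero mainSet
    rw [Finset.mem_filter]
    constructor
    · rintro ⟨⟨hc, hd, hnc⟩, hcen⟩
      refine ⟨mem_tris.2 ⟨?_, by omega, hnc⟩, hcen⟩
      intro d hd2
      have := hd d hd2
      rw [mem_chords]
      unfold IsDiagonal at this
      omega
    · rintro ⟨ht, hcen⟩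
      obtain ⟨hsub, hcard, hnc⟩ := mem_tris.1 ht
      refine ⟨⟨by omega, ?_, hnc⟩, hcen⟩
      intro d hd2
      have := mem_chords.1 (hsub hd2)
      unfold IsDiagonal
      omega
  have h1 : Nat.card {T : Finset (ℕ × ℕ) // IsTriangulation n T ∧ CentralAvoidsZero n T} =
      (mainSet n).card := by
    rw [Nat.card_congr (Equiv.subtypeEquivRight hiff), Nat.card_eq_finsetCard]
  rw [h1, main_card hn]
  have hmap : ∀ p ∈ idx n, n - 1 - (p.2 - p.1) ∈ Finset.Icc 1 (n / 2 - 1) := by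
    intro p hp
    rw [mem_idx hn] at hp
    rw [Finset.mem_Icc]
    omega
  rw [← Finset.sum_fiberwise_of_maps_to hmap
    (fun p => catalan (p.1 - 1) * (catalan (p.2 - p.1 - 1) * catalan (n - p.2 - 1)))]
  apply Finset.sum_congr rfl
  intro m hm
  rw [Finset.mem_Icc] at hm
  have hin : ∑ p ∈ (idx n).filter (fun p => n - 1 - (p.2 - p.1) = m),
      catalan (p.1 - 1) * (catalan (p.2 - p.1 - 1) * catalan (n - p.2 - 1)) =
      ∑ a ∈ Finset.Icc 1 m, catalan (a - 1) * (catalan (n - 2 - m) * catalan (m - a)) := by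
    apply Finset.sum_nbij' (fun p => p.1) (fun a => (a, a + (n - 1 - m)))
    · intro p hp
      rw [Finset.mem_filter, mem_idx hn] at hp
      rw [Finset.mem_Icc]
      omega
    · intro a ha
      rw [Finset.mem_Icc] at ha
      rw [Finset.mem_filter, mem_idx hn]
      refine ⟨⟨by omega, by omega, by omega⟩, by omega⟩
    · intro p hp
      rw [Finset.mem_filter, mem_idx hn] at hp
      rw [Prod.ext_iff]
      exact ⟨rfl, by omega⟩
    · intro a ha
      rfl
    · intro p hp
      rw [Finset.mem_filter, mem_idx hn] at hp
      have e1 : p.2 - p.1 - 1 = n - 2 - m := by omega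
      have e2 : n - p.2 - 1 = m - p.1 := by omega
      rw [e1, e2]
  rw [hin]
  have : ∑ a ∈ Finset.Icc 1 m, catalan (a - 1) * (catalan (n - 2 - m) * catalan (m - a)) =
      catalan (n - 2 - m) * ∑ a ∈ Finset.Icc 1 m, catalan (a - 1) * catalan (m - a) := by
    rw [Finset.mul_sum]
    apply Finset.sum_congr rfl
    intro a ha
    ring
  rw [this, sum_inner_catalan hm.1, Nat.mul_comm]
end

section
/- For all a ≥ 0, the Catalan number C_{2^a - 1} is odd. -/
open Finset

lemma catalan_two_mul_add_one_zmod (n : ℕ) :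
    ((catalan (2 * n + 1) : ZMod 2)) = (catalan n : ZMod 2) ^ 2 := by
  rw [catalan_succ']
  push_cast
  have hmem : ((n, n) : ℕ × ℕ) ∈ antidiagonal (2 * n) := by
    simp [Finset.HasAntidiagonal.mem_antidiagonal, two_mul]
  rw [← Finset.add_sum_erase _ _ hmem]
  have h0 : ∑ ij ∈ (antidiagonal (2 * n)).erase (n, n),
      ((catalan ij.1 : ZMod 2) * (catalan ij.2 : ZMod 2)) = 0 := by
    apply Finset.sum_involution (g := fun ij _ => (ij.2, ij.1))
    · intro a _
      have : ((catalan a.1 : ZMod 2) * catalan a.2 + catalan a.2 * catalan a.1)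
          = 2 * (catalan a.1 * catalan a.2) := by ring
      rw [this]
      have h2 : (2 : ZMod 2) = 0 := by decide
      rw [h2, zero_mul]
    · intro a ha _ h
      have h1 : a.2 = a.1 := congrArg Prod.fst h
      have ha2 := Finset.mem_of_mem_erase ha
      have ha3 : a ≠ (n, n) := Finset.ne_of_mem_erase ha
      have hs : a.1 + a.2 = 2 * n := mem_antidiagonal.mp ha2
      rw [h1, two_mul] at hs
      have h4 : a.1 = n := by omega
      exact ha3 (Prod.ext h4 (h1.trans h4))
    · intro a ha
      have ha2 := Finset.mem_of_mem_erase ha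
      have ha3 : a ≠ (n, n) := Finset.ne_of_mem_erase ha
      refine Finset.mem_erase.mpr ⟨?_, ?_⟩
      · intro h
        have h1 : a.2 = n := congrArg Prod.fst h
        have h2 : a.1 = n := congrArg Prod.snd h
        exact ha3 (Prod.ext h2 h1)
      · have : a.1 + a.2 = 2 * n := mem_antidiagonal.mp ha2
        exact mem_antidiagonal.mpr (by omega)
    · intro a _
      rfl
  rw [h0, add_zero, sq]

/-- For all `a ≥ 0`, the Catalan number `C_{2^a - 1}` is odd. -/
theorem catalan_two_pow_sub_one_odd (a : ℕ) : Odd (catalan (2 ^ a - 1)) := by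
  induction a with
  | zero => simp [catalan_zero]
  | succ a ih =>
    have h2 : 1 ≤ 2 ^ a := Nat.one_le_two_pow
    have hn : 2 ^ (a + 1) - 1 = 2 * (2 ^ a - 1) + 1 := by
      rw [pow_succ]; omega
    rw [← ZMod.natCast_eq_one_iff_odd] at ih ⊢
    rw [hn, catalan_two_mul_add_one_zmod, ih, one_pow]
end

section
/- If C_n ≡ 2 (mod 4) then n = 2^a + 2^b - 1 for some b > a ≥ 0. -/
private lemma sdiv {k : ℕ} (hk : 0 < k) :
    (Nat.digits 2 k).sum = k % 2 + (Nat.digits 2 (k / 2)).sum := by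
  rw [Nat.digits_def' one_lt_two hk]; simp

private lemma szero : ∀ k : ℕ, (Nat.digits 2 k).sum = 0 → k = 0 := by
  intro k
  induction k using Nat.strong_induction_on with
  | _ k ih =>
    intro hs
    rcases Nat.eq_zero_or_pos k with h0 | h0
    · exact h0
    · rw [sdiv h0] at hs
      have h2 := ih (k / 2) (Nat.div_lt_self h0 one_lt_two) (by omega)
      omega

private lemma spow : ∀ k : ℕ, (Nat.digits 2 k).sum = 1 → ∃ c, k = 2 ^ c := by
  intro k
  induction k using Nat.strong_induction_on with
  | _ k ih =>
    intro hs
    rcases Nat.eq_zero_or_pos k with h0 | h0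
    · simp [h0] at hs
    · rw [sdiv h0] at hs
      rcases Nat.even_or_odd k with he | ho
      · have hm2 : k % 2 = 0 := Nat.even_iff.mp he
        obtain ⟨c, hc⟩ := ih (k / 2) (Nat.div_lt_self h0 one_lt_two) (by omega)
        exact ⟨c + 1, by omega⟩
      · have hm2 : k % 2 = 1 := Nat.odd_iff.mp ho
        have := szero (k / 2) (by omega)
        exact ⟨0, by omega⟩

private lemma key : ∀ n : ℕ, (Nat.digits 2 n).sum = padicValNat 2 (n + 1) + 1 →
    ∃ a b : ℕ, a < b ∧ n = 2 ^ a + 2 ^ b - 1 := by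
  intro n
  induction n using Nat.strong_induction_on with
  | _ n ih =>
    intro hs
    rcases Nat.eq_zero_or_pos n with h0 | h0
    · simp [h0] at hs
    · rcases Nat.even_or_odd n with he | ho
      · have hm2 : n % 2 = 0 := Nat.even_iff.mp he
        have hv : padicValNat 2 (n + 1) = 0 :=
          padicValNat.eq_zero_of_not_dvd (by omega)
        rw [sdiv h0, hv, hm2] at hs
        obtain ⟨c, hc⟩ := spow (n / 2) (by omega)
        refine ⟨0, c + 1, by omega, ?_⟩
        have : 2 ^ (c + 1) = 2 * 2 ^ c := by ring
        omega
      · have hm2 : n % 2 = 1 := Nat.odd_iff.mp ho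
        have hv : padicValNat 2 (n + 1) = 1 + padicValNat 2 (n / 2 + 1) := by
          have h1 : n + 1 = 2 * (n / 2 + 1) := by omega
          rw [h1, padicValNat.mul two_ne_zero (by omega), padicValNat.self one_lt_two]
        rw [sdiv h0, hm2, hv] at hs
        obtain ⟨a, b, hab, habm⟩ := ih (n / 2) (by omega) (by omega)
        refine ⟨a + 1, b + 1, by omega, ?_⟩
        have h1 : 2 ^ (a + 1) = 2 * 2 ^ a := by ring
        have h2 : 2 ^ (b + 1) = 2 * 2 ^ b := by ring
        have h3 : 0 < 2 ^ a := pow_pos (by norm_num) a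
        have h4 : 0 < 2 ^ b := pow_pos (by norm_num) b
        omega

/-- If `C_n ≡ 2 (mod 4)` then `n = 2^a + 2^b - 1` for some `b > a ≥ 0`. -/
theorem catalan_two_mod_four (n : ℕ) (h : catalan n % 4 = 2) :
    ∃ a b : ℕ, a < b ∧ n = 2 ^ a + 2 ^ b - 1 := by
  haveI : Fact (Nat.Prime 2) := ⟨Nat.prime_two⟩
  rcases Nat.eq_zero_or_pos n with h0 | h0
  · simp [h0, catalan_zero] at h
  -- valuation of catalan n is 1
  have hc2 : catalan n = 2 * (2 * (catalan n / 4) + 1) := by omega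
  have hvc : padicValNat 2 (catalan n) = 1 := by
    rw [hc2, padicValNat.mul two_ne_zero (by omega), padicValNat.self one_lt_two,
      padicValNat.eq_zero_of_not_dvd (by omega)]
  -- valuation of centralBinom n is digit sum of n
  have hk := @sub_one_mul_padicValNat_choose_eq_sub_sum_digits' 2 n n ⟨Nat.prime_two⟩
  have hsnn : (Nat.digits 2 (n + n)).sum = (Nat.digits 2 n).sum := by
    rw [sdiv (by omega)]
    have h1 : (n + n) % 2 = 0 := by omega
    have h2 : (n + n) / 2 = n := by omega
    rw [h1, h2]; ring
  have hvcb : padicValNat 2 (Nat.centralBinom n) = (Nat.digits 2 n).sum := by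
    have : Nat.centralBinom n = (n + n).choose n := by
      rw [Nat.centralBinom, two_mul]
    rw [this]
    simpa [hsnn] using hk
  -- combine via (n+1) * catalan n = centralBinom n
  have hmul := succ_mul_catalan_eq_centralBinom n
  have hveq : padicValNat 2 (n + 1) + 1 = (Nat.digits 2 n).sum := by
    have := congrArg (padicValNat 2) hmul
    rwa [padicValNat.mul (by omega) ((by omega : catalan n ≠ 0)), hvc, hvcb] at this
  exact key n hveq.symm
end
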